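/- arXiv:2005.01055 — 5 statements merged into one kernel-verified Lean document; each statement's English description precedes it below -/
import Mathlib

section
/- For every fixed integer ℓ ≥ 1, the quantity B{m,ℓ} is asymptotically equivalent to π^m/m! as m → ∞; that is, the sequence m!·B{m,ℓ}/π^m = (m!/((ℓ−1)!·(m−ℓ)!·π^m))·∫₀^π (sin x)^{ℓ−1}·x^{m−ℓ} dx converges to 1 as m → ∞. (This asymptotic is used in the proof of Theorem 5.8.) -/
open intervalIntegral

/-- `bQ m ℓ` is the quantity `B{m,ℓ}`: for `1 ≤ ℓ ≤ m` it equals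
`(1/((ℓ-1)!(m-ℓ)!)) ∫₀^π (sin x)^{ℓ-1} x^{m-ℓ} dx`; moreover
`B{m,0} = π^m / m!` and `B{m,ℓ} = 0` for `ℓ > m`. -/
noncomputable def bQ (m ℓ : ℕ) : ℝ :=
  if ℓ = 0 then Real.pi ^ m / (Nat.factorial m : ℝ)
  else if ℓ ≤ m then
    (1 / ((Nat.factorial (ℓ - 1) : ℝ) * (Nat.factorial (m - ℓ) : ℝ))) *
      ∫ x in (0 : ℝ)..Real.pi, (Real.sin x) ^ (ℓ - 1) * x ^ (m - ℓ)
  else 0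

open Real in
private lemma beta_int (k : ℕ) : ∀ n : ℕ,
    (∫ x in (0:ℝ)..π, (π - x) ^ k * x ^ n)
      = ((Nat.factorial k : ℝ) * (Nat.factorial n : ℝ) / (Nat.factorial (k + n + 1) : ℝ))
          * π ^ (k + n + 1) := by
  induction k with
  | zero =>
    intro n
    simp only [pow_zero, one_mul, integral_pow, Nat.factorial_zero, Nat.zero_add,
      Nat.factorial_succ, Nat.cast_one]
    have hn : ((n:ℝ) + 1) ≠ 0 := by positivity
    have hf : ((Nat.factorial n : ℝ)) ≠ 0 := by positivity
    push_cast
    field_simp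
    ring
  | succ k ih =>
    intro n
    have hu : ∀ x ∈ Set.uIcc (0:ℝ) π, HasDerivAt (fun x : ℝ => (π - x) ^ (k+1))
        (-(((k:ℝ)+1) * (π - x) ^ k)) x := by
      intro x _
      have h1 : HasDerivAt (fun x : ℝ => π - x) (-1) x := (hasDerivAt_id x).const_sub π
      have h2 : HasDerivAt (fun x : ℝ => (π - x) ^ (k+1))
          (((k+1 : ℕ) : ℝ) * (π - x) ^ (k+1-1) * -1) x := h1.fun_pow (k+1)
      convert h2 using 1
      push_cast
      ring
    have hv : ∀ x ∈ Set.uIcc (0:ℝ) π, HasDerivAt (fun x : ℝ => x ^ (n+1))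
        (((n:ℝ)+1) * x ^ n) x := by
      intro x _
      have := hasDerivAt_pow (n+1) x
      simpa using this
    have hu' : IntervalIntegrable (fun x : ℝ => -(((k:ℝ)+1) * (π - x) ^ k))
        MeasureTheory.volume 0 π :=
      (by fun_prop : Continuous fun x : ℝ => -(((k:ℝ)+1) * (π - x) ^ k)).intervalIntegrable _ _
    have hv' : IntervalIntegrable (fun x : ℝ => ((n:ℝ)+1) * x ^ n)
        MeasureTheory.volume 0 π :=
      (by fun_prop : Continuous fun x : ℝ => ((n:ℝ)+1) * x ^ n).intervalIntegrable _ _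
    have ibp := intervalIntegral.integral_mul_deriv_eq_deriv_mul hu hv hu' hv'
    have lhs : (∫ x in (0:ℝ)..π, (π - x) ^ (k+1) * (((n:ℝ)+1) * x ^ n))
        = ((n:ℝ)+1) * ∫ x in (0:ℝ)..π, (π - x) ^ (k+1) * x ^ n := by
      rw [← intervalIntegral.integral_const_mul]
      apply intervalIntegral.integral_congr
      intro x _
      ring
    have rhs : (∫ x in (0:ℝ)..π, (-(((k:ℝ)+1) * (π - x) ^ k)) * x ^ (n+1))
        = -(((k:ℝ)+1) * ∫ x in (0:ℝ)..π, (π - x) ^ k * x ^ (n+1)) := by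
      rw [← intervalIntegral.integral_const_mul, ← intervalIntegral.integral_neg]
      apply intervalIntegral.integral_congr
      intro x _
      ring
    rw [lhs, rhs, ih (n+1)] at ibp
    simp only [sub_self, ne_eq] at ibp
    rw [zero_pow (by omega), zero_pow (by omega)] at ibp
    have hn : ((n:ℝ) + 1) ≠ 0 := by positivity
    have heq : (k + (n+1) + 1) = (k + 1) + n + 1 := by omega
    rw [heq] at ibp
    have key : (∫ x in (0:ℝ)..π, (π - x) ^ (k+1) * x ^ n)
        = (((k:ℝ)+1) / ((n:ℝ)+1)) *
          (((Nat.factorial k : ℝ) * (Nat.factorial (n+1) : ℝ)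
              / (Nat.factorial ((k+1) + n + 1) : ℝ)) * π ^ ((k+1) + n + 1)) := by
      field_simp at ibp ⊢
      linarith [ibp]
    rw [key]
    have hfk : (Nat.factorial (k+1) : ℝ) = ((k:ℝ)+1) * (Nat.factorial k : ℝ) := by
      rw [Nat.factorial_succ]; push_cast; ring
    have hfn : (Nat.factorial (n+1) : ℝ) = ((n:ℝ)+1) * (Nat.factorial n : ℝ) := by
      rw [Nat.factorial_succ]; push_cast; ring
    rw [hfn, hfk]
    have h3 : (Nat.factorial ((k+1)+n+1) : ℝ) ≠ 0 := by positivity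
    field_simp

private lemma fact_add_le (j : ℕ) : ∀ n : ℕ,
    Nat.factorial (n + j) ≤ (n + j) ^ j * Nat.factorial n := by
  induction j with
  | zero => intro n; simp
  | succ j ih =>
    intro n
    have h1 : n + (j+1) = (n + j) + 1 := by omega
    rw [h1, Nat.factorial_succ]
    calc (n + j + 1) * Nat.factorial (n + j)
        ≤ (n + j + 1) * ((n + j) ^ j * Nat.factorial n) :=
          Nat.mul_le_mul_left _ (ih n)
      _ ≤ (n + j + 1) * ((n + j + 1) ^ j * Nat.factorial n) :=
          Nat.mul_le_mul_left _ (Nat.mul_le_mul_right _ (Nat.pow_le_pow_left (by omega) j))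
      _ = (n + (j+1)) ^ (j+1) * Nat.factorial n := by
          rw [h1, pow_succ]; ring

open Real in
/-- For every fixed integer `ℓ ≥ 1`, the quantity `B{m,ℓ}` is asymptotically
equivalent to `π^m / m!` as `m → ∞`; that is, `m! B{m,ℓ} / π^m → 1`. -/
theorem bQ_asymptotic (ℓ : ℕ) (hℓ : 1 ≤ ℓ) :
    Filter.Tendsto
      (fun m : ℕ => (Nat.factorial m : ℝ) * bQ m ℓ / Real.pi ^ m)
      Filter.atTop (nhds 1) := by
  obtain ⟨k, rfl⟩ : ∃ k, ℓ = k + 1 := ⟨ℓ - 1, (Nat.succ_pred_eq_of_pos hℓ).symm⟩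
  rw [← Filter.tendsto_add_atTop_iff_nat (k+1)]
  have hπ0 : (0:ℝ) < π := pi_pos
  have hπ1 : (1:ℝ) < π := by linarith [pi_gt_three]
  -- notation
  set I : ℕ → ℝ := fun n => ∫ x in (0:ℝ)..π, (sin x) ^ k * x ^ n with hI
  set Bk : ℕ → ℕ → ℝ := fun j n =>
    ((Nat.factorial j : ℝ) * (Nat.factorial n : ℝ) / (Nat.factorial (j + n + 1) : ℝ))
      * π ^ (j + n + 1) with hBk
  set c : ℕ → ℝ := fun n =>
    (Nat.factorial (n + k + 1) : ℝ)
      / ((Nat.factorial k : ℝ) * (Nat.factorial n : ℝ) * π ^ (n + k + 1)) with hc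
  have hcpos : ∀ n, 0 < c n := by
    intro n
    have := Nat.factorial_pos (n + k + 1)
    positivity
  -- the goal function equals c n * I n
  have hg : ∀ n : ℕ, (Nat.factorial (n + (k+1)) : ℝ) * bQ (n + (k+1)) (k+1) / π ^ (n + (k+1))
      = c n * I n := by
    intro n
    have h1 : bQ (n + (k+1)) (k+1)
        = (1 / ((Nat.factorial k : ℝ) * (Nat.factorial n : ℝ))) * I n := by
      simp only [bQ, if_neg (by omega : ¬ (k+1) = 0), if_pos (by omega : k + 1 ≤ n + (k+1))]
      norm_num [Nat.add_sub_cancel]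
      exact Or.inl rfl
    rw [h1]
    simp only [hc]
    have h2 : n + (k+1) = n + k + 1 := by omega
    rw [h2]
    have hfk : ((Nat.factorial k : ℝ)) ≠ 0 := by positivity
    have hfn : ((Nat.factorial n : ℝ)) ≠ 0 := by positivity
    field_simp
  have hone : ∀ n, c n * Bk k n = 1 := by
    intro n
    simp only [hc, hBk]
    have h2 : k + n + 1 = n + k + 1 := by omega
    rw [h2]
    have hfk : ((Nat.factorial k : ℝ)) ≠ 0 := by positivity
    have hfn : ((Nat.factorial n : ℝ)) ≠ 0 := by positivity
    have hfm : ((Nat.factorial (n+k+1) : ℝ)) ≠ 0 := by positivity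
    field_simp
  -- upper bound : I n ≤ Bk k n
  have hIub : ∀ n, I n ≤ Bk k n := by
    intro n
    simp only [hBk]
    rw [← beta_int k n]
    apply intervalIntegral.integral_mono_on hπ0.le
      ((by fun_prop : Continuous fun x : ℝ => (sin x) ^ k * x ^ n).intervalIntegrable _ _)
      ((by fun_prop : Continuous fun x : ℝ => (π - x) ^ k * x ^ n).intervalIntegrable _ _)
    intro x hx
    have hs0 : 0 ≤ sin x := sin_nonneg_of_nonneg_of_le_pi hx.1 hx.2
    have hs1 : sin x ≤ π - x := by
      calc sin x = sin (π - x) := (Real.sin_pi_sub x).symm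
        _ ≤ π - x := Real.sin_le (by linarith [hx.2])
    exact mul_le_mul_of_nonneg_right (pow_le_pow_left₀ hs0 hs1 k) (pow_nonneg hx.1 n)
  -- pointwise lower bound on [π-1, π]
  have hlowpt : ∀ n : ℕ, ∀ x ∈ Set.Icc (π-1) π,
      (π - x) ^ k * x ^ n - ((k:ℝ)/4) * ((π - x) ^ (k+2) * x ^ n)
        ≤ (sin x) ^ k * x ^ n := by
    intro n x hx
    have hx0 : (0:ℝ) ≤ x := by linarith [hx.1]
    have hu0 : (0:ℝ) ≤ π - x := by linarith [hx.2]
    have hu1 : π - x ≤ 1 := by linarith [hx.1]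
    have key : ∀ u : ℝ, 0 ≤ u → u ≤ 1 → u * (1 - u^2/4) ≤ Real.sin u := by
      intro u h0 h1
      rcases h0.eq_or_lt with h | h
      · simp [← h]
      · have := Real.sin_gt_sub_cube h
        nlinarith
    have hsin : (π - x) * (1 - (π - x)^2/4) ≤ sin x := by
      rw [← Real.sin_pi_sub x]
      exact key (π - x) hu0 hu1
    have hs0 : 0 ≤ (π - x) * (1 - (π - x)^2/4) := by nlinarith
    have hpow : ((π - x) * (1 - (π - x)^2/4)) ^ k ≤ (sin x) ^ k :=
      pow_le_pow_left₀ hs0 hsin k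
    have hbern : 1 + (k:ℝ) * (-((π - x)^2/4)) ≤ (1 + (-((π - x)^2/4))) ^ k :=
      one_add_mul_le_pow (by nlinarith) k
    have h2 : (π - x) ^ k - (k:ℝ)/4 * (π - x) ^ (k+2)
        ≤ ((π - x) * (1 - (π - x)^2/4)) ^ k := by
      rw [mul_pow]
      have h3 : (π - x) ^ k * (1 + (k:ℝ) * (-((π - x)^2/4)))
          ≤ (π - x) ^ k * (1 + (-((π - x)^2/4))) ^ k :=
        mul_le_mul_of_nonneg_left hbern (pow_nonneg hu0 k)
      have h4 : (π - x) ^ k * (1 + (k:ℝ) * (-((π - x)^2/4)))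
          = (π - x) ^ k - (k:ℝ)/4 * (π - x) ^ (k+2) := by
        ring
      have h5 : ((1:ℝ) + (-((π - x)^2/4))) = (1 - (π - x)^2/4) := by ring
      rw [h4, h5] at h3
      exact h3
    calc (π - x) ^ k * x ^ n - ((k:ℝ)/4) * ((π - x) ^ (k+2) * x ^ n)
        = ((π - x) ^ k - (k:ℝ)/4 * (π - x) ^ (k+2)) * x ^ n := by ring
      _ ≤ (sin x) ^ k * x ^ n :=
        mul_le_mul_of_nonneg_right (h2.trans hpow) (pow_nonneg hx0 n)
  -- integral lower bound
  have hIlb : ∀ n, Bk k n - π ^ k * (π-1) ^ (n+1) - ((k:ℝ)/4) * Bk (k+2) n ≤ I n := by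
    intro n
    have i1 : ∀ (j : ℕ) (a b : ℝ), IntervalIntegrable (fun x : ℝ => (π - x) ^ j * x ^ n)
        MeasureTheory.volume a b := fun j a b =>
      (by fun_prop : Continuous fun x : ℝ => (π - x) ^ j * x ^ n).intervalIntegrable _ _
    have isin : ∀ (a b : ℝ), IntervalIntegrable (fun x : ℝ => (sin x) ^ k * x ^ n)
        MeasureTheory.volume a b := fun a b =>
      (by fun_prop : Continuous fun x : ℝ => (sin x) ^ k * x ^ n).intervalIntegrable _ _
    have hsplit : (∫ x in (0:ℝ)..(π-1), (sin x) ^ k * x ^ n)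
        + (∫ x in (π-1:ℝ)..π, (sin x) ^ k * x ^ n) = I n :=
      intervalIntegral.integral_add_adjacent_intervals (isin _ _) (isin _ _)
    have h1 : 0 ≤ ∫ x in (0:ℝ)..(π-1), (sin x) ^ k * x ^ n := by
      apply intervalIntegral.integral_nonneg (by linarith)
      intro x hx
      have : 0 ≤ sin x := sin_nonneg_of_nonneg_of_le_pi hx.1 (by linarith [hx.2])
      exact mul_nonneg (pow_nonneg this k) (pow_nonneg hx.1 n)
    have h2 : (∫ x in (π-1:ℝ)..π,
          ((π - x) ^ k * x ^ n - ((k:ℝ)/4) * ((π - x) ^ (k+2) * x ^ n)))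
        ≤ ∫ x in (π-1:ℝ)..π, (sin x) ^ k * x ^ n := by
      apply intervalIntegral.integral_mono_on (by linarith)
      · exact ((i1 k (π-1) π).sub (((i1 (k+2) (π-1) π)).const_mul _))
      · exact isin _ _
      · exact hlowpt n
    have h3 : (∫ x in (π-1:ℝ)..π,
          ((π - x) ^ k * x ^ n - ((k:ℝ)/4) * ((π - x) ^ (k+2) * x ^ n)))
        = (∫ x in (π-1:ℝ)..π, (π - x) ^ k * x ^ n)
          - ((k:ℝ)/4) * ∫ x in (π-1:ℝ)..π, (π - x) ^ (k+2) * x ^ n := by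
      rw [intervalIntegral.integral_sub (i1 k _ _) ((i1 (k+2) _ _).const_mul _),
        intervalIntegral.integral_const_mul]
    have h4 : (∫ x in (π-1:ℝ)..π, (π - x) ^ k * x ^ n)
        = Bk k n - ∫ x in (0:ℝ)..(π-1), (π - x) ^ k * x ^ n := by
      have := intervalIntegral.integral_add_adjacent_intervals (i1 k 0 (π-1)) (i1 k (π-1) π)
      rw [beta_int k n] at this
      simp only [hBk]
      linarith
    have h5 : (∫ x in (0:ℝ)..(π-1), (π - x) ^ k * x ^ n) ≤ π ^ k * (π-1) ^ (n+1) := by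
      have hmono : (∫ x in (0:ℝ)..(π-1), (π - x) ^ k * x ^ n)
          ≤ ∫ x in (0:ℝ)..(π-1), π ^ k * x ^ n := by
        apply intervalIntegral.integral_mono_on (by linarith) (i1 k _ _)
          ((by fun_prop : Continuous fun x : ℝ => π ^ k * x ^ n).intervalIntegrable _ _)
        intro x hx
        have h6 : 0 ≤ π - x := by linarith [hx.2]
        exact mul_le_mul_of_nonneg_right (pow_le_pow_left₀ h6 (by linarith [hx.1]) k)
          (pow_nonneg hx.1 n)
      have heval : (∫ x in (0:ℝ)..(π-1), π ^ k * x ^ n)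
          = π ^ k * ((π-1) ^ (n+1) / ((n:ℝ)+1)) := by
        rw [intervalIntegral.integral_const_mul, integral_pow]
        norm_num
      have h7 : π ^ k * ((π-1) ^ (n+1) / ((n:ℝ)+1)) ≤ π ^ k * (π-1) ^ (n+1) := by
        apply mul_le_mul_of_nonneg_left _ (by positivity)
        apply div_le_self (pow_nonneg (by linarith) _) (by push_cast; linarith)
      linarith [hmono, heval ▸ h7]
    have h6 : (∫ x in (π-1:ℝ)..π, (π - x) ^ (k+2) * x ^ n) ≤ Bk (k+2) n := by
      have hadd := intervalIntegral.integral_add_adjacent_intervals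
        (i1 (k+2) 0 (π-1)) (i1 (k+2) (π-1) π)
      rw [beta_int (k+2) n] at hadd
      have hpos : 0 ≤ ∫ x in (0:ℝ)..(π-1), (π - x) ^ (k+2) * x ^ n := by
        apply intervalIntegral.integral_nonneg (by linarith)
        intro x hx
        have : (0:ℝ) ≤ π - x := by linarith [hx.2]
        exact mul_nonneg (pow_nonneg this (k+2)) (pow_nonneg hx.1 n)
      simp only [hBk]
      linarith
    have hk4 : (0:ℝ) ≤ (k:ℝ)/4 := by positivity
    have h8 := mul_le_mul_of_nonneg_left h6 hk4
    linarith [hsplit, h1, h2, h3 ▸ h2]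
  -- define error terms
  set A : ℕ → ℝ := fun n => c n * (π ^ k * (π-1) ^ (n+1)) with hA
  set B : ℕ → ℝ := fun n => ((k:ℝ)/4) * (c n * Bk (k+2) n) with hB
  have hBkpos : ∀ j n, 0 < Bk j n := by
    intro j n
    simp only [hBk]
    have := Nat.factorial_pos j
    have := Nat.factorial_pos n
    have := Nat.factorial_pos (j + n + 1)
    positivity
  -- squeeze
  apply tendsto_of_tendsto_of_tendsto_of_le_of_le
    (g := fun n => 1 - A n - B n) (h := fun _ => (1:ℝ))
  · -- Tendsto (1 - A - B) → 1
    have hAten : Filter.Tendsto A Filter.atTop (nhds 0) := by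
      set r : ℝ := (π - 1)/π with hr
      have hr0 : 0 < r := by rw [hr]; exact div_pos (by linarith) hπ0
      have hr1 : r < 1 := by rw [hr, div_lt_one hπ0]; linarith
      have hbase : Filter.Tendsto (fun j : ℕ => (j:ℝ) ^ (k+1) * r ^ j)
          Filter.atTop (nhds 0) := by
        have hs := summable_pow_mul_geometric_of_norm_lt_one (R := ℝ) (k+1)
          (r := r) (by rw [Real.norm_eq_abs, abs_of_pos hr0]; exact hr1)
        exact hs.tendsto_atTop_zero
      have hshift : Filter.Tendsto
          (fun n : ℕ => ((n + (k+1) : ℕ):ℝ) ^ (k+1) * r ^ (n + (k+1)))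
          Filter.atTop (nhds 0) := hbase.comp (Filter.tendsto_add_atTop_nat (k+1))
      have hT : Filter.Tendsto (fun n : ℕ => ((n:ℝ) + k + 1) ^ (k+1) * r ^ (n+1))
          Filter.atTop (nhds 0) := by
        have := hshift.mul_const ((r ^ k)⁻¹)
        rw [zero_mul] at this
        apply this.congr
        intro n
        have hrne : r ≠ 0 := ne_of_gt hr0
        push_cast
        rw [pow_add, pow_add]
        field_simp
        ring
      apply squeeze_zero _ _ hT
      · intro n
        exact mul_nonneg (hcpos n).le
          (mul_nonneg (by positivity) (pow_nonneg (by linarith) _))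
      · intro n
        -- A n ≤ ((n:ℝ)+k+1)^(k+1) * r^(n+1)
        simp only [hA, hc]
        rw [div_mul_eq_mul_div, div_le_iff₀ (by positivity)]
        have hfact : ((Nat.factorial (n + k + 1) : ℝ))
            ≤ ((n:ℝ) + k + 1) ^ (k+1) * (Nat.factorial n : ℝ) := by
          have := fact_add_le (k+1) n
          have h2 : n + (k+1) = n + k + 1 := by omega
          rw [h2] at this
          calc ((Nat.factorial (n+k+1) : ℝ))
              ≤ (((n+k+1 : ℕ) ^ (k+1) * Nat.factorial n : ℕ) : ℝ) := by exact_mod_cast this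
            _ = ((n:ℝ) + k + 1) ^ (k+1) * (Nat.factorial n : ℝ) := by push_cast; ring
        have hok : (1:ℝ) ≤ (Nat.factorial k : ℝ) := by
          exact_mod_cast Nat.one_le_iff_ne_zero.mpr (Nat.factorial_pos k).ne'
        have hrval : r ^ (n+1) * π ^ (n+1) = (π - 1) ^ (n+1) := by
          rw [hr, div_pow]
          field_simp
        have hπm : (0:ℝ) ≤ π - 1 := by linarith
        have hq1 : (0:ℝ) ≤ π ^ k * (π-1) ^ (n+1) :=
          mul_nonneg (by positivity) (pow_nonneg hπm _)
        calc (Nat.factorial (n+k+1) : ℝ) * (π ^ k * (π-1) ^ (n+1))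
            ≤ (((n:ℝ) + k + 1) ^ (k+1) * (Nat.factorial n : ℝ)) * (π ^ k * (π-1) ^ (n+1)) :=
              mul_le_mul_of_nonneg_right hfact hq1
          _ ≤ (((n:ℝ) + k + 1) ^ (k+1) * (Nat.factorial n : ℝ)) * (π ^ k * (π-1) ^ (n+1))
                * (Nat.factorial k : ℝ) := by
              apply le_mul_of_one_le_right (mul_nonneg (by positivity) hq1) hok
          _ = ((n:ℝ) + k + 1) ^ (k+1) * r ^ (n+1)
                * ((Nat.factorial k : ℝ) * (Nat.factorial n : ℝ) * π ^ (n+k+1)) := by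
              rw [← hrval]
              ring
    have hBten : Filter.Tendsto B Filter.atTop (nhds 0) := by
      have hid : ∀ n, c n * Bk (k+2) n
          = ((Nat.factorial (k+2) : ℝ) / (Nat.factorial k : ℝ)) * π ^ 2
            * ((Nat.factorial (n+k+1) : ℝ) / (Nat.factorial (n+k+3) : ℝ)) := by
        intro n
        simp only [hc, hBk]
        have h2 : (k+2) + n + 1 = n + k + 3 := by omega
        rw [h2]
        have e1 : π ^ (n+k+3) = π ^ (n+k+1) * π ^ 2 := by ring
        have hfk : ((Nat.factorial k : ℝ)) ≠ 0 := by positivity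
        have hfn : ((Nat.factorial n : ℝ)) ≠ 0 := by positivity
        have hf3 : ((Nat.factorial (n+k+3) : ℝ)) ≠ 0 := by positivity
        have hf1 : ((Nat.factorial (n+k+1) : ℝ)) ≠ 0 := by positivity
        rw [e1]
        field_simp
      have hratio : ∀ n : ℕ, (Nat.factorial (n+k+1) : ℝ) / (Nat.factorial (n+k+3) : ℝ)
          ≤ 1 / ((n:ℝ) + 1) := by
        intro n
        rw [div_le_div_iff₀ (by positivity) (by positivity)]
        have hnat : (n+1) * Nat.factorial (n+k+1) ≤ Nat.factorial (n+k+3) := by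
          calc (n+1) * Nat.factorial (n+k+1)
              ≤ (n+k+3) * Nat.factorial (n+k+2) :=
                Nat.mul_le_mul (by omega) (Nat.factorial_le (by omega))
            _ = Nat.factorial (n+k+3) := (Nat.factorial_succ (n+k+2)).symm
        calc (Nat.factorial (n+k+1) : ℝ) * ((n:ℝ) + 1)
            = (((n+1) * Nat.factorial (n+k+1) : ℕ) : ℝ) := by push_cast; ring
          _ ≤ ((Nat.factorial (n+k+3) : ℕ) : ℝ) := by exact_mod_cast hnat
          _ = 1 * (Nat.factorial (n+k+3) : ℝ) := by ring
      set C : ℝ := ((k:ℝ)/4) * (((Nat.factorial (k+2) : ℝ) / (Nat.factorial k : ℝ)) * π ^ 2)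
        with hC
      have hC0 : 0 ≤ C := by rw [hC]; positivity
      have hCten : Filter.Tendsto (fun n : ℕ => C * (1 / ((n:ℝ) + 1)))
          Filter.atTop (nhds 0) := by
        have := tendsto_one_div_add_atTop_nhds_zero_nat.const_mul C
        simpa using this
      apply squeeze_zero _ _ hCten
      · intro n
        simp only [hB]
        have := (hcpos n).le
        have := (hBkpos (k+2) n).le
        positivity
      · intro n
        simp only [hB]
        rw [hid n, hC]
        have h9 : (0:ℝ) ≤ ((Nat.factorial (k+2) : ℝ) / (Nat.factorial k : ℝ)) * π ^ 2 := by
          positivity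
        calc ((k:ℝ)/4) * (((Nat.factorial (k+2) : ℝ) / (Nat.factorial k : ℝ)) * π ^ 2
              * ((Nat.factorial (n+k+1) : ℝ) / (Nat.factorial (n+k+3) : ℝ)))
            ≤ ((k:ℝ)/4) * (((Nat.factorial (k+2) : ℝ) / (Nat.factorial k : ℝ)) * π ^ 2
              * (1 / ((n:ℝ) + 1))) := by
              apply mul_le_mul_of_nonneg_left _ (by positivity)
              exact mul_le_mul_of_nonneg_left (hratio n) h9
          _ = ((k:ℝ)/4) * (((Nat.factorial (k+2) : ℝ) / (Nat.factorial k : ℝ)) * π ^ 2)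
              * (1 / ((n:ℝ) + 1)) := by ring
      
    have := (tendsto_const_nhds (x := (1:ℝ)) (f := Filter.atTop (α := ℕ))).sub hAten
    have := this.sub hBten
    simpa using this
  · exact tendsto_const_nhds
  · -- lower bound: 1 - A n - B n ≤ goal n
    intro n
    simp only [hg n]
    have h := hIlb n
    have h2 := mul_le_mul_of_nonneg_left h (hcpos n).le
    have h3 : c n * (Bk k n - π ^ k * (π-1) ^ (n+1) - ((k:ℝ)/4) * Bk (k+2) n)
        = 1 - A n - B n := by
      simp only [hA, hB]
      have := hone n
      nlinarith [hone n]
    linarith [h3 ▸ h2]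
  · -- upper bound
    intro n
    simp only [hg n]
    have h2 := mul_le_mul_of_nonneg_left (hIub n) (hcpos n).le
    rw [hone n] at h2
    exact h2
end

section
/- For all integers n ≥ 1 and k ≥ 2 one has the recurrence B{n, k−2} − B{n, k} = (k−1)²·B{n+2, k} (equation (5.11) of the paper, where the stated conventions B{m,0} = π^m/m! and B{m,ℓ} = 0 for ℓ > m are in force). In particular, for 4 ≤ k ≤ n this is the integral identity (1/((k−3)!·(n−k+2)!))·∫₀^π (sin x)^{k−3}·x^{n−k+2} dx − (1/((k−1)!·(n−k)!))·∫₀^π (sin x)^{k−1}·x^{n−k} dx = ((k−1)²/((k−1)!·(n−k+2)!))·∫₀^π (sin x)^{k−1}·x^{n−k+2} dx. -/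
open intervalIntegral

noncomputable def Jint (a b : ℕ) : ℝ := ∫ x in (0:ℝ)..Real.pi, (Real.sin x) ^ a * x ^ b

lemma Jint_integrable (a b : ℕ) : IntervalIntegrable (fun x : ℝ => Real.sin x ^ a * x ^ b)
    MeasureTheory.volume 0 Real.pi := by
  apply Continuous.intervalIntegrable; fun_prop

lemma hasDerivA (s q : ℕ) (x : ℝ) :
    HasDerivAt (fun y : ℝ => ((s:ℝ)+2) * (Real.sin y ^ (s+1) * Real.cos y * y ^ (q+2))
        - ((q:ℝ)+2) * (Real.sin y ^ (s+2) * y ^ (q+1)))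
      (((s:ℝ)+2)*((s:ℝ)+1) * (Real.sin x ^ s * x ^ (q+2))
        - ((s:ℝ)+2)^2 * (Real.sin x ^ (s+2) * x ^ (q+2))
        - ((q:ℝ)+1)*((q:ℝ)+2) * (Real.sin x ^ (s+2) * x ^ q)) x := by
  have hs1 : HasDerivAt (fun y : ℝ => Real.sin y ^ (s+1)) (((s:ℝ)+1) * Real.sin x ^ s * Real.cos x) x := by
    simpa using (Real.hasDerivAt_sin x).fun_pow (s+1)
  have hs2 : HasDerivAt (fun y : ℝ => Real.sin y ^ (s+2)) (((s:ℝ)+2) * Real.sin x ^ (s+1) * Real.cos x) x := by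
    simpa using (Real.hasDerivAt_sin x).fun_pow (s+2)
  have hp1 : HasDerivAt (fun y : ℝ => y ^ (q+1)) (((q:ℝ)+1) * x ^ q) x := by
    simpa using hasDerivAt_pow (q+1) x
  have hp2 : HasDerivAt (fun y : ℝ => y ^ (q+2)) (((q:ℝ)+2) * x ^ (q+1)) x := by
    simpa using hasDerivAt_pow (q+2) x
  have h1 := (((hs1.mul (Real.hasDerivAt_cos x)).mul hp2).const_mul ((s:ℝ)+2))
  have h2 := ((hs2.mul hp1).const_mul ((q:ℝ)+2))
  have h := h1.sub h2
  refine h.congr_deriv ?_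
  simp only [Pi.mul_apply]
  have hc : Real.cos x ^ 2 = 1 - Real.sin x ^ 2 := Real.cos_sq' x
  linear_combination (((s:ℝ)+2)*((s:ℝ)+1) * (Real.sin x ^ s * x ^(q+2))) * hc

lemma keyA (s q : ℕ) :
    ((s:ℝ)+2)*((s:ℝ)+1) * Jint s (q+2) - ((s:ℝ)+2)^2 * Jint (s+2) (q+2)
      = ((q:ℝ)+1)*((q:ℝ)+2) * Jint (s+2) q := by
  have hFTC := intervalIntegral.integral_eq_sub_of_hasDerivAt
    (a := (0:ℝ)) (b := Real.pi) (f := fun y : ℝ => ((s:ℝ)+2) * (Real.sin y ^ (s+1) * Real.cos y * y ^ (q+2))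
        - ((q:ℝ)+2) * (Real.sin y ^ (s+2) * y ^ (q+1)))
    (f' := fun x : ℝ => ((s:ℝ)+2)*((s:ℝ)+1) * (Real.sin x ^ s * x ^ (q+2))
        - ((s:ℝ)+2)^2 * (Real.sin x ^ (s+2) * x ^ (q+2))
        - ((q:ℝ)+1)*((q:ℝ)+2) * (Real.sin x ^ (s+2) * x ^ q))
    (fun x _ => hasDerivA s q x)
    (by apply Continuous.intervalIntegrable; fun_prop)
  simp [Real.sin_pi] at hFTC
  have h1 := Jint_integrable s (q+2)
  have h2 := Jint_integrable (s+2) (q+2)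
  have h3 := Jint_integrable (s+2) q
  rw [intervalIntegral.integral_sub ((h1.const_mul _).sub (h2.const_mul _)) (h3.const_mul _),
    intervalIntegral.integral_sub (h1.const_mul _) (h2.const_mul _),
    intervalIntegral.integral_const_mul, intervalIntegral.integral_const_mul,
    intervalIntegral.integral_const_mul] at hFTC
  unfold Jint
  linarith [hFTC]

lemma keyB (s : ℕ) :
    ((s:ℝ)+2)*((s:ℝ)+1) * Jint s 1 = ((s:ℝ)+2)^2 * Jint (s+2) 1 := by
  have hd : ∀ x : ℝ, HasDerivAt (fun y : ℝ => ((s:ℝ)+2) * (Real.sin y ^ (s+1) * Real.cos y * y)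
        - Real.sin y ^ (s+2))
      (((s:ℝ)+2)*((s:ℝ)+1) * (Real.sin x ^ s * x)
        - ((s:ℝ)+2)^2 * (Real.sin x ^ (s+2) * x)) x := by
    intro x
    have hs1 : HasDerivAt (fun y : ℝ => Real.sin y ^ (s+1)) (((s:ℝ)+1) * Real.sin x ^ s * Real.cos x) x := by
      simpa using (Real.hasDerivAt_sin x).fun_pow (s+1)
    have hs2 : HasDerivAt (fun y : ℝ => Real.sin y ^ (s+2)) (((s:ℝ)+2) * Real.sin x ^ (s+1) * Real.cos x) x := by
      simpa using (Real.hasDerivAt_sin x).fun_pow (s+2)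
    have h := (((hs1.mul (Real.hasDerivAt_cos x)).mul (hasDerivAt_id' (x := x))).const_mul ((s:ℝ)+2)).sub hs2
    refine h.congr_deriv ?_
    simp only [Pi.mul_apply]
    have hc : Real.cos x ^ 2 = 1 - Real.sin x ^ 2 := Real.cos_sq' x
    linear_combination (((s:ℝ)+2)*((s:ℝ)+1) * (Real.sin x ^ s * x)) * hc
  have hFTC := intervalIntegral.integral_eq_sub_of_hasDerivAt (a := (0:ℝ)) (b := Real.pi)
    (f' := fun x : ℝ => ((s:ℝ)+2)*((s:ℝ)+1) * (Real.sin x ^ s * x)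
        - ((s:ℝ)+2)^2 * (Real.sin x ^ (s+2) * x))
    (fun x _ => hd x)
    (by apply Continuous.intervalIntegrable; fun_prop)
  simp [Real.sin_pi] at hFTC
  have h1 : IntervalIntegrable (fun x : ℝ => Real.sin x ^ s * x) MeasureTheory.volume 0 Real.pi := by
    apply Continuous.intervalIntegrable; fun_prop
  have h2 : IntervalIntegrable (fun x : ℝ => Real.sin x ^ (s+2) * x) MeasureTheory.volume 0 Real.pi := by
    apply Continuous.intervalIntegrable; fun_prop
  rw [intervalIntegral.integral_sub (h1.const_mul _) (h2.const_mul _),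
    intervalIntegral.integral_const_mul, intervalIntegral.integral_const_mul] at hFTC
  simp only [Jint, pow_one]
  linarith [hFTC]

lemma keyC (s : ℕ) :
    ((s:ℝ)+2)*((s:ℝ)+1) * Jint s 0 = ((s:ℝ)+2)^2 * Jint (s+2) 0 := by
  have h := integral_sin_pow (a := (0:ℝ)) (b := Real.pi) s
  simp [Real.sin_pi] at h
  have hJ : ∀ a : ℕ, Jint a 0 = ∫ x in (0:ℝ)..Real.pi, Real.sin x ^ a := by
    intro a; unfold Jint; simp
  rw [hJ, hJ, h]
  have hne : ((s:ℝ)+2) ≠ 0 := by positivity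
  field_simp

lemma keyD (t : ℕ) :
    Jint 1 (t+2) = Real.pi ^ (t+2) - ((t:ℝ)+2)*((t:ℝ)+1) * Jint 1 t := by
  have hd : ∀ x : ℝ, HasDerivAt (fun y : ℝ => -(Real.cos y * y ^ (t+2)) + ((t:ℝ)+2) * (Real.sin y * y ^ (t+1)))
      (Real.sin x * x ^ (t+2) + ((t:ℝ)+2)*((t:ℝ)+1) * (Real.sin x * x ^ t)) x := by
    intro x
    have hp1 : HasDerivAt (fun y : ℝ => y ^ (t+1)) (((t:ℝ)+1) * x ^ t) x := by
      simpa using hasDerivAt_pow (t+1) x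
    have hp2 : HasDerivAt (fun y : ℝ => y ^ (t+2)) (((t:ℝ)+2) * x ^ (t+1)) x := by
      simpa using hasDerivAt_pow (t+2) x
    have h := (((Real.hasDerivAt_cos x).mul hp2).neg).add
      (((Real.hasDerivAt_sin x).mul hp1).const_mul ((t:ℝ)+2))
    refine h.congr_deriv ?_
    ring
  have hFTC := intervalIntegral.integral_eq_sub_of_hasDerivAt (a := (0:ℝ)) (b := Real.pi)
    (f' := fun x : ℝ => Real.sin x * x ^ (t+2) + ((t:ℝ)+2)*((t:ℝ)+1) * (Real.sin x * x ^ t))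
    (fun x _ => hd x)
    (by apply Continuous.intervalIntegrable; fun_prop)
  simp [Real.sin_pi, Real.cos_pi] at hFTC
  have h1 : IntervalIntegrable (fun x : ℝ => Real.sin x * x ^ (t+2)) MeasureTheory.volume 0 Real.pi := by
    apply Continuous.intervalIntegrable; fun_prop
  have h2 : IntervalIntegrable (fun x : ℝ => Real.sin x * x ^ t) MeasureTheory.volume 0 Real.pi := by
    apply Continuous.intervalIntegrable; fun_prop
  rw [intervalIntegral.integral_add h1 (h2.const_mul _),
    intervalIntegral.integral_const_mul] at hFTC
  simp only [Jint, pow_one]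
  linarith [hFTC]

lemma keyE : Jint 1 1 = Real.pi := by
  have hd : ∀ x : ℝ, HasDerivAt (fun y : ℝ => Real.sin y - y * Real.cos y)
      (Real.sin x * x) x := by
    intro x
    have h := (Real.hasDerivAt_sin x).sub ((hasDerivAt_id' (x := x)).mul (Real.hasDerivAt_cos x))
    refine h.congr_deriv ?_
    ring
  have hFTC := intervalIntegral.integral_eq_sub_of_hasDerivAt (a := (0:ℝ)) (b := Real.pi)
    (f' := fun x : ℝ => Real.sin x * x)
    (fun x _ => hd x)
    (by apply Continuous.intervalIntegrable; fun_prop)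
  simp [Real.sin_pi, Real.cos_pi] at hFTC
  simp only [Jint, pow_one]
  rw [hFTC]

lemma fact_cast2 (a : ℕ) : ((a+2).factorial : ℝ) = ((a:ℝ)+2)*((a:ℝ)+1)*(a.factorial : ℝ) := by
  rw [show a + 2 = (a+1)+1 from rfl, Nat.factorial_succ, Nat.factorial_succ]
  push_cast; ring

lemma main_int (a b : ℕ) :
    (1 / ((a.factorial : ℝ) * ((b+2).factorial : ℝ))) * Jint a (b+2)
      - (1 / (((a+2).factorial : ℝ) * (b.factorial : ℝ))) * Jint (a+2) b
    = (((a:ℝ)+2)^2 / (((a+2).factorial : ℝ) * ((b+2).factorial : ℝ))) * Jint (a+2) (b+2) := by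
  have key := keyA a b
  have ha := fact_cast2 a
  have hb := fact_cast2 b
  have h1 : (a.factorial : ℝ) ≠ 0 := by positivity
  have h2 : (b.factorial : ℝ) ≠ 0 := by positivity
  have h3 : ((a:ℝ)+2) ≠ 0 := by positivity
  have h4 : ((a:ℝ)+1) ≠ 0 := by positivity
  have h5 : ((b:ℝ)+2) ≠ 0 := by positivity
  have h6 : ((b:ℝ)+1) ≠ 0 := by positivity
  rw [ha, hb]
  linear_combination (norm := (field_simp; ring))
    (1/(((a:ℝ)+2)*((a:ℝ)+1)*(a.factorial:ℝ)*(((b:ℝ)+2)*((b:ℝ)+1)*(b.factorial:ℝ)))) * key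

/-- For all integers `n ≥ 1` and `k ≥ 2` one has the recurrence
`B{n,k-2} - B{n,k} = (k-1)² B{n+2,k}`; in particular, for `4 ≤ k ≤ n` this is the
corresponding integral identity. -/
theorem bQ_recurrence (n k : ℕ) (hn : 1 ≤ n) (hk : 2 ≤ k) :
    bQ n (k - 2) - bQ n k = ((k : ℝ) - 1) ^ 2 * bQ (n + 2) k ∧
    (4 ≤ k → k ≤ n →
      (1 / ((Nat.factorial (k - 3) : ℝ) * (Nat.factorial (n - k + 2) : ℝ))) *
          (∫ x in (0 : ℝ)..Real.pi, (Real.sin x) ^ (k - 3) * x ^ (n - k + 2))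
        - (1 / ((Nat.factorial (k - 1) : ℝ) * (Nat.factorial (n - k) : ℝ))) *
          (∫ x in (0 : ℝ)..Real.pi, (Real.sin x) ^ (k - 1) * x ^ (n - k))
      = (((k : ℝ) - 1) ^ 2 / ((Nat.factorial (k - 1) : ℝ) * (Nat.factorial (n - k + 2) : ℝ))) *
          ∫ x in (0 : ℝ)..Real.pi, (Real.sin x) ^ (k - 1) * x ^ (n - k + 2)) := by
  have part2 : 4 ≤ k → k ≤ n →
      (1 / ((Nat.factorial (k - 3) : ℝ) * (Nat.factorial (n - k + 2) : ℝ))) *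
          (∫ x in (0 : ℝ)..Real.pi, (Real.sin x) ^ (k - 3) * x ^ (n - k + 2))
        - (1 / ((Nat.factorial (k - 1) : ℝ) * (Nat.factorial (n - k) : ℝ))) *
          (∫ x in (0 : ℝ)..Real.pi, (Real.sin x) ^ (k - 1) * x ^ (n - k))
      = (((k : ℝ) - 1) ^ 2 / ((Nat.factorial (k - 1) : ℝ) * (Nat.factorial (n - k + 2) : ℝ))) *
          ∫ x in (0 : ℝ)..Real.pi, (Real.sin x) ^ (k - 1) * x ^ (n - k + 2) := by
    intro hk4 hkn
    have h := main_int (k - 3) (n - k)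
    rw [show k - 3 + 2 = k - 1 by omega] at h
    rw [show (((k - 3 : ℕ) : ℝ) + 2) ^ 2 = ((k : ℝ) - 1) ^ 2 by
      rw [Nat.cast_sub (by omega : 3 ≤ k)]; ring] at h
    exact h
  refine ⟨?_, part2⟩
  by_cases hk2 : k = 2
  · -- k = 2
    subst hk2
    rw [show 2 - 2 = 0 from rfl]
    have h0 : bQ n 0 = Real.pi ^ n / (n.factorial : ℝ) := by simp [bQ]
    have h2 : bQ (n + 2) 2 = (1 / ((Nat.factorial 1 : ℝ) * (n.factorial : ℝ))) * Jint 1 n := by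
      rw [bQ, if_neg (by omega), if_pos (by omega), show 2 - 1 = 1 from rfl,
        show n + 2 - 2 = n by omega]; rfl
    rcases eq_or_lt_of_le hn with h1 | h1
    · -- n = 1
      rw [← h1] at h0 h2 ⊢
      have hb : bQ 1 2 = 0 := by rw [bQ, if_neg (by omega), if_neg (by omega)]
      rw [h0, h2, hb, keyE]
      norm_num [Nat.factorial]
    · -- n ≥ 2
      have hb : bQ n 2 = (1 / ((Nat.factorial 1 : ℝ) * ((n - 2).factorial : ℝ))) * Jint 1 (n - 2) := by
        rw [bQ, if_neg (by omega), if_pos (by omega), show 2 - 1 = 1 from rfl]; rfl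
      have hD := keyD (n - 2)
      rw [show n - 2 + 2 = n by omega] at hD
      rw [show ((n - 2 : ℕ) : ℝ) = (n : ℝ) - 2 by rw [Nat.cast_sub (by omega : 2 ≤ n)]; norm_num] at hD
      have hf : (n.factorial : ℝ) = (n : ℝ) * ((n : ℝ) - 1) * ((n - 2).factorial : ℝ) := by
        have := fact_cast2 (n - 2)
        rw [show n - 2 + 2 = n by omega,
          show ((n - 2 : ℕ) : ℝ) = (n : ℝ) - 2 by rw [Nat.cast_sub (by omega : 2 ≤ n)]; norm_num] at this
        rw [this]; ring
      rw [h0, h2, hb, hf]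
      have hfne : ((n - 2).factorial : ℝ) ≠ 0 := by positivity
      have hn1 : (n : ℝ) - 1 ≠ 0 := by
        have : (2 : ℝ) ≤ (n : ℝ) := by exact_mod_cast h1
        intro hcon; nlinarith
      have hn0 : (n : ℝ) ≠ 0 := by positivity
      simp only [Nat.factorial_one, Nat.cast_one]
      linear_combination (norm := (field_simp; ring))
        (-1 / ((n:ℝ) * ((n:ℝ) - 1) * ((n - 2).factorial : ℝ))) * hD
  · -- k ≥ 3
    have hk3 : 3 ≤ k := by omega
    by_cases hkn : k ≤ n
    · -- main case
      have hbk2 : bQ n (k - 2) = (1 / (((k - 3).factorial : ℝ) * ((n - k + 2).factorial : ℝ))) *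
          Jint (k - 3) (n - k + 2) := by
        rw [bQ, if_neg (by omega), if_pos (by omega), show k - 2 - 1 = k - 3 by omega,
          show n - (k - 2) = n - k + 2 by omega]; rfl
      have hbk : bQ n k = (1 / (((k - 1).factorial : ℝ) * ((n - k).factorial : ℝ))) *
          Jint (k - 1) (n - k) := by
        rw [bQ, if_neg (by omega), if_pos (by omega)]; rfl
      have hbk3 : bQ (n + 2) k = (1 / (((k - 1).factorial : ℝ) * ((n - k + 2).factorial : ℝ))) *
          Jint (k - 1) (n - k + 2) := by
        rw [bQ, if_neg (by omega), if_pos (by omega), show n + 2 - k = n - k + 2 by omega]; rfl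
      have h := main_int (k - 3) (n - k)
      rw [show k - 3 + 2 = k - 1 by omega] at h
      rw [show (((k - 3 : ℕ) : ℝ) + 2) ^ 2 = ((k : ℝ) - 1) ^ 2 by
        rw [Nat.cast_sub (by omega : 3 ≤ k)]; ring] at h
      rw [hbk2, hbk, hbk3]
      rw [h]; ring
    · -- n < k
      by_cases hkn1 : k = n + 1
      · -- k = n + 1, n ≥ 2
        subst hkn1
        have hn2 : 2 ≤ n := by omega
        have hbk2 : bQ n (n + 1 - 2) = (1 / (((n - 2).factorial : ℝ) * ((1 : ℕ).factorial : ℝ))) *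
            Jint (n - 2) 1 := by
          rw [show n + 1 - 2 = n - 1 by omega, bQ, if_neg (by omega), if_pos (by omega),
            show n - 1 - 1 = n - 2 by omega, show n - (n - 1) = 1 by omega]; rfl
        have hbk : bQ n (n + 1) = 0 := by rw [bQ, if_neg (by omega), if_neg (by omega)]
        have hbk3 : bQ (n + 2) (n + 1) = (1 / ((n.factorial : ℝ) * ((1 : ℕ).factorial : ℝ))) *
            Jint n 1 := by
          rw [bQ, if_neg (by omega), if_pos (by omega), show n + 1 - 1 = n by omega,
            show n + 2 - (n + 1) = 1 by omega]; rfl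
        have hB := keyB (n - 2)
        rw [show n - 2 + 2 = n by omega] at hB
        rw [show ((n - 2 : ℕ) : ℝ) = (n : ℝ) - 2 by rw [Nat.cast_sub hn2]; norm_num] at hB
        have hf : (n.factorial : ℝ) = (n : ℝ) * ((n : ℝ) - 1) * ((n - 2).factorial : ℝ) := by
          have := fact_cast2 (n - 2)
          rw [show n - 2 + 2 = n by omega,
            show ((n - 2 : ℕ) : ℝ) = (n : ℝ) - 2 by rw [Nat.cast_sub hn2]; norm_num] at this
          rw [this]; ring
        rw [hbk2, hbk, hbk3, hf]
        have hc : ((n + 1 : ℕ) : ℝ) - 1 = (n : ℝ) := by push_cast; ring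
        rw [hc]
        have hfne : ((n - 2).factorial : ℝ) ≠ 0 := by positivity
        have hn1 : (n : ℝ) - 1 ≠ 0 := by
          have : (2 : ℝ) ≤ (n : ℝ) := by exact_mod_cast hn2
          intro hcon; nlinarith
        have hn0 : (n : ℝ) ≠ 0 := by positivity
        simp only [Nat.factorial_one, Nat.cast_one]
        linear_combination (norm := (field_simp; ring))
          (1 / ((n:ℝ) * ((n:ℝ) - 1) * ((n - 2).factorial : ℝ))) * hB
      · by_cases hkn2 : k = n + 2
        · -- k = n + 2
          subst hkn2
          have hbk2 : bQ n (n + 2 - 2) = (1 / (((n - 1).factorial : ℝ) * ((0 : ℕ).factorial : ℝ))) *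
              Jint (n - 1) 0 := by
            rw [show n + 2 - 2 = n by omega, bQ, if_neg (by omega), if_pos (by omega),
              show n - n = 0 by omega]; rfl
          have hbk : bQ n (n + 2) = 0 := by rw [bQ, if_neg (by omega), if_neg (by omega)]
          have hbk3 : bQ (n + 2) (n + 2) = (1 / (((n + 1).factorial : ℝ) * ((0 : ℕ).factorial : ℝ))) *
              Jint (n + 1) 0 := by
            rw [bQ, if_neg (by omega), if_pos (by omega), show n + 2 - 1 = n + 1 by omega,
              show n + 2 - (n + 2) = 0 by omega]; rfl
          have hC := keyC (n - 1)
          rw [show n - 1 + 2 = n + 1 by omega] at hC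
          rw [show ((n - 1 : ℕ) : ℝ) = (n : ℝ) - 1 by rw [Nat.cast_sub hn]; norm_num] at hC
          have hf : ((n + 1).factorial : ℝ) = ((n : ℝ) + 1) * (n : ℝ) * ((n - 1).factorial : ℝ) := by
            have := fact_cast2 (n - 1)
            rw [show n - 1 + 2 = n + 1 by omega,
              show ((n - 1 : ℕ) : ℝ) = (n : ℝ) - 1 by rw [Nat.cast_sub hn]; norm_num] at this
            rw [this]; ring
          rw [hbk2, hbk, hbk3, hf]
          have hc : ((n + 2 : ℕ) : ℝ) - 1 = (n : ℝ) + 1 := by push_cast; ring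
          rw [hc]
          have hfne : ((n - 1).factorial : ℝ) ≠ 0 := by positivity
          have hn0 : (n : ℝ) ≠ 0 := by positivity
          have hn1 : (n : ℝ) + 1 ≠ 0 := by positivity
          simp only [Nat.factorial_zero, Nat.cast_one]
          linear_combination (norm := (field_simp; ring))
            (1 / (((n:ℝ) + 1) * (n:ℝ) * ((n - 1).factorial : ℝ))) * hC
        · -- k ≥ n + 3
          have h1 : bQ n (k - 2) = 0 := by rw [bQ, if_neg (by omega), if_neg (by omega)]
          have h2 : bQ n k = 0 := by rw [bQ, if_neg (by omega), if_neg (by omega)]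
          have h3 : bQ (n + 2) k = 0 := by rw [bQ, if_neg (by omega), if_neg (by omega)]
          rw [h1, h2, h3]; ring
end

section
/- For every integer n ≥ 2 one has the identity (n!/(2π^n))·( B{n,2} + π·B{n+1,2} + 3·B{n+2,2} ) = 1/2 + (n!/(2π^n))·( ∑_{k ∈ {0,…,n}, n−k even} (−1)^{(n−k)/2}·(k+2)·π^k/k! + 2·(−1)^{n/2}·𝟙{n is even} + π·(−1)^{(n−1)/2}·𝟙{n is odd} ). Written out via the integral definition of B, the left-hand side equals (n!/(2π^n))·( (1/(n−2)!)·∫₀^π x^{n−2}·sin x dx + (π/(n−1)!)·∫₀^π x^{n−1}·sin x dx + (3/n!)·∫₀^π x^{n}·sin x dx ). (In the paper this quantity is the expected statistical dimension E δ(W̆_{n,2}) of the cone over the weighted typical cell of an isotropic great hypersphere tessellation of S²; the identity is equation (5.13).) -/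
open intervalIntegral

namespace StatDimAux

open Real MeasureTheory

noncomputable def II (m : ℕ) : ℝ := ∫ x in (0:ℝ)..π, x ^ m * Real.sin x

lemma II_zero : II 0 = 2 := by
  simp [II, integral_sin]; norm_num

lemma sin_ibp (m : ℕ) :
    II (m + 1) = π ^ (m + 1) + (m + 1) * ∫ x in (0:ℝ)..π, x ^ m * Real.cos x := by
  have h := intervalIntegral.integral_mul_deriv_eq_deriv_mul
    (u := fun x : ℝ => x ^ (m+1)) (u' := fun x : ℝ => (m+1) * x ^ m)
    (v := fun x : ℝ => -Real.cos x) (v' := fun x : ℝ => Real.sin x)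
    (a := 0) (b := π)
    (fun x _ => by simpa using hasDerivAt_pow (m+1) x)
    (fun x _ => by have := (Real.hasDerivAt_cos x).neg; simp only [neg_neg] at this; exact this)
    (by apply Continuous.intervalIntegrable; continuity)
    (by apply Continuous.intervalIntegrable; continuity)
  simp only [Real.cos_pi, Real.cos_zero] at h
  rw [II, h]
  rw [show (∫ x in (0:ℝ)..π, (m+1 : ℝ) * x ^ m * -Real.cos x)
      = -((m+1 : ℝ) * ∫ x in (0:ℝ)..π, x ^ m * Real.cos x) by
    rw [← intervalIntegral.integral_const_mul, ← intervalIntegral.integral_neg]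
    congr 1; ext x; ring]
  ring

lemma cos_ibp (m : ℕ) :
    (∫ x in (0:ℝ)..π, x ^ (m+1) * Real.cos x) = -((m+1 : ℝ) * II m) := by
  have h := intervalIntegral.integral_mul_deriv_eq_deriv_mul
    (u := fun x : ℝ => x ^ (m+1)) (u' := fun x : ℝ => (m+1) * x ^ m)
    (v := fun x : ℝ => Real.sin x) (v' := fun x : ℝ => Real.cos x)
    (a := 0) (b := π)
    (fun x _ => by simpa using hasDerivAt_pow (m+1) x)
    (fun x _ => Real.hasDerivAt_sin x)
    (by apply Continuous.intervalIntegrable; continuity)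
    (by apply Continuous.intervalIntegrable; continuity)
  simp only [Real.sin_pi, Real.sin_zero] at h
  rw [h]; rw [II]
  rw [show (∫ x in (0:ℝ)..π, (m+1 : ℝ) * x ^ m * Real.sin x)
      = (m+1 : ℝ) * ∫ x in (0:ℝ)..π, x ^ m * Real.sin x by
    rw [← intervalIntegral.integral_const_mul]; congr 1; ext x; ring]
  ring

lemma II_one : II 1 = π := by
  have := sin_ibp 0
  simp only [pow_one, Nat.cast_zero] at this
  rw [this]
  simp [integral_cos]

lemma II_rec (m : ℕ) : II (m + 2) = π ^ (m+2) - ((m:ℝ)+2) * ((m:ℝ)+1) * II m := by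
  have h1 := sin_ibp (m+1)
  have h2 := cos_ibp m
  rw [h2] at h1
  push_cast at h1 ⊢
  rw [h1]; ring

noncomputable def G (m : ℕ) : ℝ :=
  (∑ k ∈ Finset.range (m + 1),
      if Even (m - k) then (-1 : ℝ) ^ ((m - k) / 2) * π ^ k / (Nat.factorial k : ℝ) else 0)
    + (if Even m then (-1 : ℝ) ^ (m / 2) else 0)

lemma G_zero : G 0 = 2 := by
  norm_num [G]

lemma G_one : G 1 = π := by
  norm_num [G, Finset.sum_range_succ, Nat.even_iff]

lemma G_rec (m : ℕ) : G (m + 2) = π ^ (m + 2) / (Nat.factorial (m+2) : ℝ) - G m := by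
  unfold G
  rw [Finset.sum_range_succ, Finset.sum_range_succ]
  have h1 : ∀ k ∈ Finset.range (m+1),
      (if Even (m + 2 - k) then (-1 : ℝ) ^ ((m + 2 - k) / 2) * π ^ k / (Nat.factorial k : ℝ) else 0)
      = -(if Even (m - k) then (-1 : ℝ) ^ ((m - k) / 2) * π ^ k / (Nat.factorial k : ℝ) else 0) := by
    intro k hk
    have hk' : k ≤ m := Nat.lt_succ_iff.mp (Finset.mem_range.mp hk)
    have e1 : m + 2 - k = (m - k) + 2 := by omega
    have e2 : ((m - k) + 2) / 2 = (m - k) / 2 + 1 := by omega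
    rw [e1, e2]
    by_cases h : Even (m - k)
    · have h2 : Even (m - k + 2) := by simpa [Nat.even_add] using h
      simp only [h, h2, if_true, pow_succ]
      ring
    · have h2 : ¬ Even (m - k + 2) := by simpa [Nat.even_add] using h
      simp [h, h2]
  rw [Finset.sum_congr rfl h1, Finset.sum_neg_distrib]
  have e3 : m + 2 - (m + 1) = 1 := by omega
  have e4 : m + 2 - (m + 2) = 0 := by omega
  have e5 : (m + 2) / 2 = m / 2 + 1 := by omega
  rw [e3, e4, e5]
  by_cases h : Even m
  · have h2 : Even (m + 2) := by simpa [Nat.even_add] using h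
    simp [h, h2, pow_succ]
    ring
  · have h2 : ¬ Even (m + 2) := by simpa [Nat.even_add] using h
    simp [h, h2]
    ring

lemma Ival (m : ℕ) : II m = (Nat.factorial m : ℝ) * G m := by
  induction m using Nat.twoStepInduction with
  | zero => simp [II_zero, G_zero]
  | one => simp [II_one, G_one]
  | more m ih _ =>
    rw [II_rec, G_rec m, ih]
    rw [show ((Nat.factorial (m+2) : ℝ)) = ((m:ℝ)+2) * ((m:ℝ)+1) * (Nat.factorial m : ℝ) by
      push_cast [Nat.factorial_succ]; ring]
    have hf : ((Nat.factorial m : ℝ)) ≠ 0 := Nat.cast_ne_zero.mpr (Nat.factorial_ne_zero m)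
    have h1 : ((m:ℝ)+2) ≠ 0 := by positivity
    have h2 : ((m:ℝ)+1) ≠ 0 := by positivity
    field_simp

lemma reindex (m : ℕ) :
    (∑ k ∈ Finset.range (m + 3),
        if Even (m + 2 - k) then
          (-1 : ℝ) ^ ((m + 2 - k) / 2) * (k : ℝ) * π ^ k / (Nat.factorial k : ℝ) else 0)
    = π * (∑ k ∈ Finset.range (m + 2),
        if Even (m + 1 - k) then
          (-1 : ℝ) ^ ((m + 1 - k) / 2) * π ^ k / (Nat.factorial k : ℝ) else 0) := by
  rw [Finset.sum_range_succ' (fun k =>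
      if Even (m + 2 - k) then (-1 : ℝ) ^ ((m + 2 - k) / 2) * (k : ℝ) * π ^ k / (Nat.factorial k : ℝ) else 0) (m+2)]
  have h0 : (if Even (m + 2 - 0) then
      (-1 : ℝ) ^ ((m + 2 - 0) / 2) * ((0:ℕ) : ℝ) * π ^ (0:ℕ) / (Nat.factorial 0 : ℝ) else 0) = 0 := by
    by_cases h : Even (m + 2 - 0) <;> simp [h]
  rw [h0, add_zero, Finset.mul_sum]
  apply Finset.sum_congr rfl
  intro k _
  have e : m + 2 - (k + 1) = m + 1 - k := by omega
  simp only [e]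
  by_cases h : Even (m + 1 - k)
  · simp only [h, if_true, Nat.factorial_succ, pow_succ, Nat.cast_mul, Nat.cast_succ]
    have hk : ((k:ℝ) + 1) ≠ 0 := by positivity
    have hf : ((Nat.factorial k : ℝ)) ≠ 0 := Nat.cast_ne_zero.mpr (Nat.factorial_ne_zero k)
    field_simp
  · simp [h]

lemma sum_split (m : ℕ) :
    (∑ k ∈ Finset.range (m + 3),
        if Even (m + 2 - k) then
          (-1 : ℝ) ^ ((m + 2 - k) / 2) * ((k : ℝ) + 2) * π ^ k / (Nat.factorial k : ℝ)
        else 0)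
    = 2 * (∑ k ∈ Finset.range (m + 3),
        if Even (m + 2 - k) then (-1 : ℝ) ^ ((m + 2 - k) / 2) * π ^ k / (Nat.factorial k : ℝ) else 0)
      + π * (∑ k ∈ Finset.range (m + 2),
        if Even (m + 1 - k) then (-1 : ℝ) ^ ((m + 1 - k) / 2) * π ^ k / (Nat.factorial k : ℝ) else 0) := by
  have hsplit : ∀ k : ℕ,
      (if Even (m + 2 - k) then
          (-1 : ℝ) ^ ((m + 2 - k) / 2) * ((k : ℝ) + 2) * π ^ k / (Nat.factorial k : ℝ) else 0)
      = 2 * (if Even (m + 2 - k) then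
          (-1 : ℝ) ^ ((m + 2 - k) / 2) * π ^ k / (Nat.factorial k : ℝ) else 0)
        + (if Even (m + 2 - k) then
          (-1 : ℝ) ^ ((m + 2 - k) / 2) * (k : ℝ) * π ^ k / (Nat.factorial k : ℝ) else 0) := by
    intro k
    by_cases h : Even (m + 2 - k) <;> simp [h] <;> ring
  simp only [hsplit]
  rw [Finset.sum_add_distrib, ← Finset.mul_sum, reindex]

lemma key (m : ℕ) :
    G m + π * G (m + 1) + 3 * G (m + 2)
      = π ^ (m + 2) / (Nat.factorial (m + 2) : ℝ)
        + ((∑ k ∈ Finset.range (m + 3),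
              if Even (m + 2 - k) then
                (-1 : ℝ) ^ ((m + 2 - k) / 2) * ((k : ℝ) + 2) * π ^ k / (Nat.factorial k : ℝ)
              else 0)
          + 2 * (if Even (m + 2) then (-1 : ℝ) ^ ((m + 2) / 2) else 0)
          + π * (if Odd (m + 2) then (-1 : ℝ) ^ ((m + 2 - 1) / 2) else 0)) := by
  have hGm : G m = π ^ (m + 2) / (Nat.factorial (m + 2) : ℝ) - G (m + 2) := by
    rw [G_rec m]; ring
  rw [hGm, sum_split]
  have hodd : (if Odd (m + 2) then (-1 : ℝ) ^ ((m + 2 - 1) / 2) else 0)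
      = (if Even (m + 1) then (-1 : ℝ) ^ ((m + 1) / 2) else 0) := by
    have h1 : Odd (m + 2) ↔ Even (m + 1) := by
      simp [Nat.odd_iff, Nat.even_iff]; omega
    have h2 : m + 2 - 1 = m + 1 := by omega
    rw [h2]
    by_cases h : Even (m + 1)
    · rw [if_pos (h1.mpr h), if_pos h]
    · rw [if_neg (fun ho => h (h1.mp ho)), if_neg h]
  rw [hodd]
  rw [show G (m + 2) = (∑ k ∈ Finset.range (m + 3),
      if Even (m + 2 - k) then (-1 : ℝ) ^ ((m + 2 - k) / 2) * π ^ k / (Nat.factorial k : ℝ) else 0)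
      + (if Even (m + 2) then (-1 : ℝ) ^ ((m + 2) / 2) else 0) from rfl]
  rw [show G (m + 1) = (∑ k ∈ Finset.range (m + 2),
      if Even (m + 1 - k) then (-1 : ℝ) ^ ((m + 1 - k) / 2) * π ^ k / (Nat.factorial k : ℝ) else 0)
      + (if Even (m + 1) then (-1 : ℝ) ^ ((m + 1) / 2) else 0) from rfl]
  ring

lemma bQ_eval (m : ℕ) : bQ (m + 2) 2 = II m / (Nat.factorial m : ℝ) := by
  rw [bQ]
  have h1 : ¬ (2 = 0) := by norm_num
  have h2 : 2 ≤ m + 2 := by omega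
  rw [if_neg h1, if_pos h2]
  have e : m + 2 - 2 = m := by omega
  rw [e]
  have hint : (∫ x in (0:ℝ)..π, Real.sin x ^ (2 - 1) * x ^ m) = II m := by
    rw [II]; congr 1; ext x; ring
  rw [hint]
  norm_num
  ring

end StatDimAux

open StatDimAux Real

/-- For every integer `n ≥ 2`, the expected statistical dimension identity (5.13). -/
theorem statdim_weighted_cell_d2 (n : ℕ) (hn : 2 ≤ n) :
    ((Nat.factorial n : ℝ) / (2 * Real.pi ^ n)) *
        (bQ n 2 + Real.pi * bQ (n + 1) 2 + 3 * bQ (n + 2) 2)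
      = 1 / 2 + ((Nat.factorial n : ℝ) / (2 * Real.pi ^ n)) *
          ((∑ k ∈ Finset.range (n + 1),
              if Even (n - k) then
                (-1 : ℝ) ^ ((n - k) / 2) * ((k : ℝ) + 2) * Real.pi ^ k / (Nat.factorial k : ℝ)
              else 0)
            + 2 * (if Even n then (-1 : ℝ) ^ (n / 2) else 0)
            + Real.pi * (if Odd n then (-1 : ℝ) ^ ((n - 1) / 2) else 0)) ∧
    ((Nat.factorial n : ℝ) / (2 * Real.pi ^ n)) *
        (bQ n 2 + Real.pi * bQ (n + 1) 2 + 3 * bQ (n + 2) 2)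
      = ((Nat.factorial n : ℝ) / (2 * Real.pi ^ n)) *
          ((1 / (Nat.factorial (n - 2) : ℝ)) *
              (∫ x in (0 : ℝ)..Real.pi, x ^ (n - 2) * Real.sin x)
            + (Real.pi / (Nat.factorial (n - 1) : ℝ)) *
              (∫ x in (0 : ℝ)..Real.pi, x ^ (n - 1) * Real.sin x)
            + (3 / (Nat.factorial n : ℝ)) *
              (∫ x in (0 : ℝ)..Real.pi, x ^ n * Real.sin x)) := by
  obtain ⟨m, rfl⟩ : ∃ m, n = m + 2 := ⟨n - 2, by omega⟩
  have hb1 : bQ (m + 2) 2 = II m / (Nat.factorial m : ℝ) := bQ_eval m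
  have hb2 : bQ (m + 2 + 1) 2 = II (m + 1) / (Nat.factorial (m + 1) : ℝ) := by
    rw [show m + 2 + 1 = m + 1 + 2 from by omega]; exact bQ_eval (m + 1)
  have hb3 : bQ (m + 2 + 2) 2 = II (m + 2) / (Nat.factorial (m + 2) : ℝ) := bQ_eval (m + 2)
  have hfne : ∀ j : ℕ, ((Nat.factorial j : ℝ)) ≠ 0 :=
    fun j => Nat.cast_ne_zero.mpr (Nat.factorial_ne_zero j)
  constructor
  · rw [hb1, hb2, hb3, Ival m, Ival (m + 1), Ival (m + 2)]
    have hc : ∀ j : ℕ, (Nat.factorial j : ℝ) * G j / (Nat.factorial j : ℝ) = G j :=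
      fun j => mul_div_cancel_left₀ _ (hfne j)
    rw [hc m, hc (m + 1), hc (m + 2)]
    rw [show m + 2 + 1 = m + 3 from by omega]
    rw [show (G m + π * G (m + 1) + 3 * G (m + 2)) = _ from key m, mul_add]
    congr 1
    have hπ : π ^ (m + 2) ≠ 0 := pow_ne_zero _ (ne_of_gt Real.pi_pos)
    field_simp
  · rw [hb1, hb2, hb3]
    rw [show m + 2 - 2 = m from by omega, show m + 2 - 1 = m + 1 from by omega]
    have hI : ∀ j : ℕ, (∫ x in (0 : ℝ)..π, x ^ j * Real.sin x) = II j := fun _ => rfl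
    rw [hI m, hI (m + 1), hI (m + 2)]
    ring
end

section
/- Let d ≥ 1, k ∈ {0,1,…,d} and ℓ ∈ {0,1,…,k} be fixed integers. Then lim_{n→∞} n^ℓ · ω_{ℓ+1} · binomial(n−d+k, k−ℓ)/C(n−d+k, k) = (2√π)^ℓ · Γ(ℓ/2 + 1) · binomial(k, ℓ). (This is the first limit relation of Theorem 5.8: by Corollary 5.7, binomial(n−d+k, k−ℓ)/C(n−d+k, k) equals the expected ℓ-th spherical intrinsic volume E v_ℓ(Z_{n,d}^{(k)}) of the typical spherical k-face of a great hypersphere tessellation of S^d with n hyperspheres, and the limit equals the expected ℓ-th Euclidean intrinsic volume E V_ℓ(Z_{γ,d}^{(k)}) of the typical k-face of the stationary isotropic Poisson hyperplane tessellation of R^d with intensity γ = Γ((d+1)/2)/(√π·Γ(d/2)).) -/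
/-- `omegaS ℓ` is `ω_{ℓ+1} = 2 π^((ℓ+1)/2) / Γ((ℓ+1)/2)`, the ℓ-dimensional
Hausdorff measure (surface area) of the unit sphere `S^ℓ`. -/
noncomputable def omegaS (ℓ : ℕ) : ℝ :=
  2 * Real.pi ^ (((ℓ : ℝ) + 1) / 2) / Real.Gamma (((ℓ : ℝ) + 1) / 2)

/-- The Schläfli number `C(n,d) = 2 ∑_{r=0}^{d} (n-1).choose r`. -/
def schlafliC (n d : ℕ) : ℕ :=
  2 * ∑ r ∈ Finset.range (d + 1), Nat.choose (n - 1) r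

open Filter Finset

private lemma choose_div_pow_tendsto (j : ℕ) :
    Tendsto (fun m : ℕ => (m.choose j : ℝ) / (m : ℝ) ^ j) atTop
      (nhds ((j.factorial : ℝ)⁻¹)) := by
  have h1 : Tendsto (fun m : ℕ => (j.factorial : ℝ)⁻¹ * ∏ i ∈ range j, (1 - (i : ℝ) / m))
      atTop (nhds ((j.factorial : ℝ)⁻¹ * ∏ i ∈ range j, (1 : ℝ))) := by
    refine Tendsto.const_mul _ (tendsto_finset_prod _ fun i _ => ?_)
    simpa using tendsto_const_nhds.sub (tendsto_const_div_atTop_nhds_zero_nat (i : ℝ))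
  simp only [prod_const_one, mul_one] at h1
  refine h1.congr' ?_
  filter_upwards [eventually_ge_atTop j, eventually_ge_atTop 1] with m hm h1m
  have hm0 : (m : ℝ) ≠ 0 := by positivity
  have hcast : ((m.descFactorial j : ℕ) : ℝ) = ∏ i ∈ range j, ((m : ℝ) - i) := by
    rw [Nat.descFactorial_eq_prod_range, Nat.cast_prod]
    refine Finset.prod_congr rfl fun i hi => ?_
    have : i ≤ m := le_trans (le_of_lt (mem_range.mp hi)) hm
    rw [Nat.cast_sub this]
  have hch : (m.choose j : ℝ) = (∏ i ∈ range j, ((m : ℝ) - i)) / (j.factorial : ℝ) := by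
    rw [← hcast, Nat.descFactorial_eq_factorial_mul_choose]
    push_cast
    field_simp
  have hprod : ∏ i ∈ range j, (1 - (i : ℝ) / m)
      = (∏ i ∈ range j, ((m : ℝ) - i)) / (m : ℝ) ^ j := by
    rw [show (m : ℝ) ^ j = ∏ _i ∈ range j, (m : ℝ) by
      rw [prod_const, card_range], ← prod_div_distrib]
    exact Finset.prod_congr rfl fun i _ => by field_simp
  rw [hprod, hch]
  field_simp

private lemma sum_choose_div_pow_tendsto (k : ℕ) :
    Tendsto (fun m : ℕ => (∑ r ∈ range (k + 1), ((m - 1).choose r : ℝ)) / (m : ℝ) ^ k)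
      atTop (nhds ((k.factorial : ℝ)⁻¹)) := by
  have hsum : ∀ m : ℕ, (∑ r ∈ range (k + 1), ((m - 1).choose r : ℝ)) / (m : ℝ) ^ k
      = ∑ r ∈ range (k + 1), ((m - 1).choose r : ℝ) / (m : ℝ) ^ k := fun m =>
    Finset.sum_div _ _ _
  simp only [hsum]
  have hval : ((k.factorial : ℝ)⁻¹)
      = ∑ r ∈ range (k + 1), (if r = k then (k.factorial : ℝ)⁻¹ else 0) := by
    rw [Finset.sum_ite_eq' (range (k + 1)) k fun _ => (k.factorial : ℝ)⁻¹,
      if_pos (mem_range.mpr (Nat.lt_succ_self k))]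
  rw [hval]
  refine tendsto_finset_sum _ fun r hr => ?_
  rcases eq_or_ne r k with rfl | hrk
  · simp only [if_pos rfl]
    have hA := (choose_div_pow_tendsto r).comp (tendsto_sub_atTop_nat 1)
    have hB : Tendsto (fun m : ℕ => (((m - 1 : ℕ) : ℝ)) ^ r / (m : ℝ) ^ r) atTop
        (nhds 1) := by
      have h1 : Tendsto (fun m : ℕ => (1 - (1 : ℝ) / m) ^ r) atTop
          (nhds ((1 - 0 : ℝ) ^ r)) :=
        (tendsto_const_nhds.sub (tendsto_const_div_atTop_nhds_zero_nat 1)).pow r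
      simp only [sub_zero, one_pow] at h1
      refine h1.congr' ?_
      filter_upwards [eventually_ge_atTop 1] with m hm
      have hm0 : (m : ℝ) ≠ 0 := by positivity
      rw [Nat.cast_sub hm]
      push_cast
      rw [← div_pow]
      congr 1
      field_simp
    have h2 := hA.mul hB
    rw [mul_one] at h2
    refine h2.congr' ?_
    filter_upwards [eventually_ge_atTop 2] with m hm
    have hm2 : (2 : ℝ) ≤ (m : ℝ) := by exact_mod_cast hm
    have hm0 : (m : ℝ) ≠ 0 := by linarith
    have hm10 : ((m - 1 : ℕ) : ℝ) ≠ 0 := by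
      rw [Nat.cast_sub (by omega : 1 ≤ m)]; push_cast; intro h; linarith
    simp only [Function.comp]
    rw [div_mul_div_comm, mul_comm (((m - 1 : ℕ) : ℝ) ^ r) ((m : ℝ) ^ r),
      mul_div_mul_right _ _ (pow_ne_zero r hm10)]
  · simp only [if_neg hrk]
    have hr' : r < k := lt_of_le_of_ne (Nat.lt_succ_iff.mp (mem_range.mp hr)) hrk
    refine squeeze_zero' (Filter.Eventually.of_forall fun m => by positivity) ?_
      tendsto_one_div_atTop_nhds_zero_nat
    filter_upwards [eventually_ge_atTop 1] with m hm
    have hmpos : (0 : ℝ) < (m : ℝ) := by exact_mod_cast hm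
    have hnat : (m - 1).choose r * m ≤ m ^ k := by
      calc (m - 1).choose r * m ≤ m ^ (k - 1) * m :=
            Nat.mul_le_mul_right _ (le_trans (Nat.choose_le_pow _ r)
              (le_trans (Nat.pow_le_pow_left (Nat.sub_le m 1) r)
                (Nat.pow_le_pow_right (by omega) (by omega))))
        _ = m ^ k := by rw [← pow_succ]; congr 1; omega
    rw [div_le_div_iff₀ (by positivity) hmpos, one_mul]
    exact_mod_cast hnat

private lemma limit_const_eq (k ℓ : ℕ) (hℓ : ℓ ≤ k) :
    omegaS ℓ / 2 * (1 : ℝ) ^ ℓ * ((k - ℓ).factorial : ℝ)⁻¹ / ((k.factorial : ℝ)⁻¹)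
      = (2 * Real.sqrt Real.pi) ^ ℓ * Real.Gamma ((ℓ : ℝ) / 2 + 1) *
        (Nat.choose k ℓ : ℝ) := by
  have hdup := Real.Gamma_mul_Gamma_add_half ((ℓ : ℝ) / 2 + 1 / 2)
  have h2s : 2 * ((ℓ : ℝ) / 2 + 1 / 2) = (ℓ : ℝ) + 1 := by ring
  rw [h2s] at hdup
  have hgam : Real.Gamma ((ℓ : ℝ) + 1) = (ℓ.factorial : ℝ) := by
    exact_mod_cast Real.Gamma_nat_eq_factorial ℓ
  rw [hgam] at hdup
  have hpow2 : (2 : ℝ) ^ ((1 : ℝ) - ((ℓ : ℝ) + 1)) = ((2 : ℝ) ^ ℓ)⁻¹ := by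
    rw [show ((1 : ℝ) - ((ℓ : ℝ) + 1)) = -(ℓ : ℝ) by ring,
      Real.rpow_neg (by norm_num), Real.rpow_natCast]
  rw [hpow2] at hdup
  have hpi : Real.pi ^ (((ℓ : ℝ) + 1) / 2)
      = Real.sqrt Real.pi ^ ℓ * Real.sqrt Real.pi := by
    rw [show (((ℓ : ℝ) + 1) / 2) = (ℓ : ℝ) * (1/2) + 1/2 by ring,
      Real.rpow_add Real.pi_pos, ← Real.rpow_natCast (Real.sqrt Real.pi) ℓ,
      ← Real.sqrt_eq_rpow, mul_comm (ℓ : ℝ) (1/2), Real.rpow_mul Real.pi_pos.le,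
      Real.sqrt_eq_rpow]
  have hchoose : (Nat.choose k ℓ : ℝ)
      = (k.factorial : ℝ) / ((ℓ.factorial : ℝ) * ((k - ℓ).factorial : ℝ)) := by
    rw [Nat.cast_choose ℝ hℓ]
  have hG1 : Real.Gamma (((ℓ : ℝ) + 1) / 2) ≠ 0 :=
    ne_of_gt (Real.Gamma_pos_of_pos (by positivity))
  have hgam2 : (ℓ : ℝ)/2 + 1/2 + 1/2 = (ℓ : ℝ)/2 + 1 := by ring
  have hgam3 : (ℓ : ℝ)/2 + 1/2 = ((ℓ : ℝ) + 1)/2 := by ring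
  rw [hgam2, hgam3] at hdup
  have hfk : (k.factorial : ℝ) ≠ 0 := by positivity
  have hfl : (ℓ.factorial : ℝ) ≠ 0 := by positivity
  have hfkl : ((k - ℓ).factorial : ℝ) ≠ 0 := by positivity
  have hsq : Real.sqrt Real.pi ≠ 0 := by positivity
  have h2l : ((2 : ℝ) ^ ℓ) ≠ 0 := by positivity
  have hΓ : Real.Gamma ((ℓ : ℝ)/2 + 1)
      = ((ℓ.factorial : ℝ) * ((2 : ℝ) ^ ℓ)⁻¹ * Real.sqrt Real.pi)
        / Real.Gamma (((ℓ : ℝ) + 1)/2) :=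
    (eq_div_iff hG1).mpr (by rw [mul_comm]; exact hdup)
  rw [omegaS, hpi, hchoose, hΓ, one_pow, mul_pow]
  field_simp

/-- First limit relation of Theorem 5.8: for fixed `d ≥ 1`, `0 ≤ k ≤ d` and
`0 ≤ ℓ ≤ k`, the rescaled expected spherical intrinsic volume
`n^ℓ ω_{ℓ+1} (n-d+k).choose (k-ℓ) / C(n-d+k, k)` of the typical spherical k-face
converges, as `n → ∞`, to `(2√π)^ℓ Γ(ℓ/2 + 1) (k.choose ℓ)`, the expected ℓ-th
Euclidean intrinsic volume of the typical k-face of the stationary isotropic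
Poisson hyperplane tessellation with intensity `γ = Γ((d+1)/2)/(√π Γ(d/2))`. -/
theorem typical_face_intrinsic_volume_limit (d k ℓ : ℕ)
    (hd : 1 ≤ d) (hk : k ≤ d) (hℓ : ℓ ≤ k) :
    Filter.Tendsto
      (fun n : ℕ => (n : ℝ) ^ ℓ * omegaS ℓ *
        (Nat.choose (n - d + k) (k - ℓ) : ℝ) / (schlafliC (n - d + k) k : ℝ))
      Filter.atTop
      (nhds ((2 * Real.sqrt Real.pi) ^ ℓ * Real.Gamma ((ℓ : ℝ) / 2 + 1) *
        (Nat.choose k ℓ : ℝ))) := by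
  set c := d - k with hc
  have hA : Tendsto (fun n : ℕ => ((n - c).choose (k - ℓ) : ℝ) / ((n - c : ℕ) : ℝ) ^ (k - ℓ))
      atTop (nhds (((k - ℓ).factorial : ℝ)⁻¹)) :=
    (choose_div_pow_tendsto (k - ℓ)).comp (tendsto_sub_atTop_nat c)
  have hB : Tendsto (fun n : ℕ =>
      (∑ r ∈ range (k + 1), ((n - c - 1).choose r : ℝ)) / ((n - c : ℕ) : ℝ) ^ k)
      atTop (nhds ((k.factorial : ℝ)⁻¹)) :=
    (sum_choose_div_pow_tendsto k).comp (tendsto_sub_atTop_nat c)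
  have hG : Tendsto (fun n : ℕ => 1 + (c : ℝ) / ((n - c : ℕ) : ℝ)) atTop (nhds 1) := by
    have := (tendsto_const_div_atTop_nhds_zero_nat (c : ℝ)).comp (tendsto_sub_atTop_nat c)
    simpa using tendsto_const_nhds.add this
  have key : Tendsto (fun n : ℕ =>
      omegaS ℓ / 2 * (1 + (c : ℝ) / ((n - c : ℕ) : ℝ)) ^ ℓ *
        (((n - c).choose (k - ℓ) : ℝ) / ((n - c : ℕ) : ℝ) ^ (k - ℓ)) /
        ((∑ r ∈ range (k + 1), ((n - c - 1).choose r : ℝ)) / ((n - c : ℕ) : ℝ) ^ k))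
      atTop (nhds (omegaS ℓ / 2 * (1 : ℝ) ^ ℓ * ((k - ℓ).factorial : ℝ)⁻¹ /
        ((k.factorial : ℝ)⁻¹))) :=
    (((tendsto_const_nhds.mul (hG.pow ℓ)).mul hA).div hB (by positivity))
  rw [limit_const_eq k ℓ hℓ] at key
  refine key.congr' ?_
  filter_upwards [eventually_ge_atTop (d + c + 2)] with n hn
  have hmk : n - d + k = n - c := by omega
  set m := n - c with hm
  have hm2 : 2 ≤ m := by omega
  have hnm : n = m + c := by omega
  have hmpos : (0 : ℝ) < (m : ℝ) := by exact_mod_cast (by omega : 0 < m)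
  have hm0 : (m : ℝ) ≠ 0 := ne_of_gt hmpos
  have hSpos : (0 : ℝ) < ∑ r ∈ range (k + 1), ((m - 1).choose r : ℝ) :=
    Finset.sum_pos' (fun i _ => by positivity)
      ⟨0, mem_range.mpr (Nat.succ_pos k), by simp⟩
  have hS0 : (∑ r ∈ range (k + 1), ((m - 1).choose r : ℝ)) ≠ 0 := ne_of_gt hSpos
  have hcastn : (n : ℝ) = (m : ℝ) + (c : ℝ) := by rw [hnm]; push_cast; ring
  have hfrac : 1 + (c : ℝ) / (m : ℝ) = (n : ℝ) / (m : ℝ) := by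
    rw [hcastn]; field_simp
  have hschlafli : ((schlafliC m k : ℕ) : ℝ)
      = 2 * ∑ r ∈ range (k + 1), ((m - 1).choose r : ℝ) := by
    rw [schlafliC]; push_cast; ring
  rw [hmk, hfrac, hschlafli]
  have hpow : (m : ℝ) ^ k = (m : ℝ) ^ ℓ * (m : ℝ) ^ (k - ℓ) := by
    rw [← pow_add]; congr 1; omega
  rw [hpow, div_pow]
  field_simp
end

section
/- Let d ≥ 1, k ∈ {1,…,d} and ℓ ∈ {0,1,…,k} be fixed integers. Then lim_{n→∞} n^ℓ · ω_{ℓ+1} · ((n−d+k)!/(2π^{n−d+k})) · B{n−d+k+ℓ, k} = (2π^{3/2})^ℓ · Γ(ℓ/2 + 1)/Γ(ℓ + 1) = ω_{ℓ+1}·π^ℓ/2. (This is the analytic content of the second limit relation of Theorem 5.8: by Corollary 5.7, ((n−d+k)!/(2π^{n−d+k}))·B{n−d+k+ℓ,k}·A[k,ℓ] equals the expected ℓ-th spherical intrinsic volume E v_ℓ(W_{n,d}^{(k)}) of the weighted typical spherical k-face of an isotropic great hypersphere tessellation of S^d with n hyperspheres, where A[k,ℓ] is a constant independent of n.) -/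
open intervalIntegral

open Real Filter Topology


lemma betaNat (a b : ℕ) :
    ∫ t in (0:ℝ)..π, t ^ a * (π - t) ^ b
      = π ^ (a + b + 1) * a.factorial * b.factorial / (a + b + 1).factorial := by
  induction b generalizing a with
  | zero =>
    simp only [pow_zero, mul_one, integral_pow]
    rw [Nat.factorial_succ]
    push_cast
    rw [Nat.add_zero] -- ?
    field_simp
    ring
  | succ b ih =>
    have key : ∫ t in (0:ℝ)..π, t ^ a * (π - t) ^ (b + 1)
        = ((b:ℝ) + 1) / ((a:ℝ) + 1) * ∫ t in (0:ℝ)..π, t ^ (a + 1) * (π - t) ^ b := by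
      have hu : ∀ x ∈ Set.uIcc (0:ℝ) π, HasDerivAt (fun t : ℝ => (π - t) ^ (b + 1))
          (-(((b:ℝ) + 1) * (π - x) ^ b)) x := by
        intro x _
        have h1 : HasDerivAt (fun t : ℝ => π - t) (-1) x := by
          simpa using (hasDerivAt_id x).const_sub π
        have := h1.fun_pow (b + 1)
        simpa [mul_comm, mul_assoc] using this
      have hv : ∀ x ∈ Set.uIcc (0:ℝ) π, HasDerivAt (fun t : ℝ => t ^ (a + 1) / ((a:ℝ) + 1))
          (x ^ a) x := by
        intro x _
        have := (hasDerivAt_pow (a + 1) x).div_const ((a:ℝ) + 1)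
        have ha : ((a:ℝ) + 1) ≠ 0 := by positivity
        simpa [mul_comm, mul_div_assoc, mul_div_cancel_left₀, ha] using this
      have h := integral_mul_deriv_eq_deriv_mul hu hv
        (by apply Continuous.intervalIntegrable; continuity)
        (by apply Continuous.intervalIntegrable; continuity)
      have h2 : ∫ x in (0:ℝ)..π, (π - x) ^ (b+1) * x ^ a
          = - ∫ x in (0:ℝ)..π, (-(((b:ℝ) + 1) * (π - x) ^ b)) * (x ^ (a+1) / ((a:ℝ)+1)) := by
        simpa using h
      rw [show (fun t : ℝ => t ^ a * (π - t) ^ (b+1)) = fun t : ℝ => (π - t) ^ (b+1) * t ^ a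
        from by funext t; ring] at *
      rw [h2, ← intervalIntegral.integral_neg, ← intervalIntegral.integral_const_mul]
      apply intervalIntegral.integral_congr
      intro x _
      have ha : ((a:ℝ) + 1) ≠ 0 := by positivity
      field_simp
    rw [key, ih (a + 1)]
    have h1 : a + 1 + b + 1 = a + (b + 1) + 1 := by ring
    rw [h1, Nat.factorial_succ a, Nat.factorial_succ b]
    have ha : ((a:ℝ) + 1) ≠ 0 := by positivity
    have hf : ((a + (b+1) + 1).factorial : ℝ) ≠ 0 := by positivity
    push_cast
    field_simp

lemma flipInt (j M : ℕ) :
    (∫ x in (0:ℝ)..π, sin x ^ j * x ^ M) = ∫ t in (0:ℝ)..π, sin t ^ j * (π - t) ^ M := by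
  have h := intervalIntegral.integral_comp_sub_left (a := (0:ℝ)) (b := π)
    (fun x => sin x ^ j * x ^ M) π
  simp only [sub_self, sub_zero] at h
  rw [← h]
  apply intervalIntegral.integral_congr
  intro t _
  simp [Real.sin_pi_sub]

lemma I_le_J (j M : ℕ) :
    (∫ t in (0:ℝ)..π, sin t ^ j * (π - t) ^ M) ≤ ∫ t in (0:ℝ)..π, t ^ j * (π - t) ^ M := by
  apply intervalIntegral.integral_mono_on pi_pos.le
  · apply Continuous.intervalIntegrable; continuity
  · apply Continuous.intervalIntegrable; continuity
  · intro x hx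
    have h1 : 0 ≤ sin x := Real.sin_nonneg_of_nonneg_of_le_pi hx.1 hx.2
    have h2 : sin x ≤ x := Real.sin_le hx.1
    have h3 : (0:ℝ) ≤ (π - x) ^ M := pow_nonneg (by linarith [hx.2]) M
    exact mul_le_mul_of_nonneg_right (pow_le_pow_left₀ h1 h2 j) h3

lemma J_lower (j M : ℕ) {δ : ℝ} (h0 : 0 < δ) (h1 : δ ≤ 1) :
    (∫ t in (0:ℝ)..π, t ^ j * (π - t) ^ M) - π ^ (j+1) * (π - δ) ^ M
      ≤ ∫ t in (0:ℝ)..δ, t ^ j * (π - t) ^ M := by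
  have hδπ : δ ≤ π := h1.trans (by linarith [Real.pi_gt_three])
  have hsplit : (∫ t in (0:ℝ)..δ, t ^ j * (π - t) ^ M) + ∫ t in δ..π, t ^ j * (π - t) ^ M
      = ∫ t in (0:ℝ)..π, t ^ j * (π - t) ^ M := by
    apply intervalIntegral.integral_add_adjacent_intervals <;>
      (apply Continuous.intervalIntegrable; continuity)
  have htail : (∫ t in δ..π, t ^ j * (π - t) ^ M) ≤ π ^ (j+1) * (π - δ) ^ M := by
    have hb : (∫ t in δ..π, t ^ j * (π - t) ^ M) ≤ ∫ _t in δ..π, π ^ j * (π - δ) ^ M := by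
      apply intervalIntegral.integral_mono_on hδπ
      · apply Continuous.intervalIntegrable; continuity
      · apply Continuous.intervalIntegrable; continuity
      · intro x hx
        have hx0 : 0 ≤ x := h0.le.trans hx.1
        have : (π - x) ^ M ≤ (π - δ) ^ M := by
          apply pow_le_pow_left₀ (by linarith [hx.2]) (by linarith [hx.1]) M
        have hxj : x ^ j ≤ π ^ j := pow_le_pow_left₀ hx0 hx.2 j
        have h5 : (0:ℝ) ≤ (π - x) ^ M := pow_nonneg (by linarith [hx.2]) M
        calc x ^ j * (π - x) ^ M ≤ π ^ j * (π - x) ^ M :=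
              mul_le_mul_of_nonneg_right hxj h5
          _ ≤ π ^ j * (π - δ) ^ M := by
              apply mul_le_mul_of_nonneg_left this (by positivity)
    rw [intervalIntegral.integral_const] at hb
    calc (∫ t in δ..π, t ^ j * (π - t) ^ M) ≤ (π - δ) • (π ^ j * (π - δ) ^ M) := hb
      _ ≤ π * (π ^ j * (π - δ) ^ M) := by
          rw [smul_eq_mul]
          exact mul_le_mul_of_nonneg_right (by linarith)
            (mul_nonneg (by positivity) (pow_nonneg (by linarith) M))
      _ = π ^ (j+1) * (π - δ) ^ M := by ring
  linarith

lemma I_lower (j M : ℕ) {δ : ℝ} (h0 : 0 < δ) (h1 : δ ≤ 1) :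
    (1 - δ^2/4) ^ j * ((∫ t in (0:ℝ)..π, t ^ j * (π - t) ^ M) - π ^ (j+1) * (π - δ) ^ M)
      ≤ ∫ t in (0:ℝ)..π, sin t ^ j * (π - t) ^ M := by
  have hδπ : δ ≤ π := h1.trans (by linarith [Real.pi_gt_three])
  have hc0 : (0:ℝ) ≤ 1 - δ^2/4 := by nlinarith
  have hcj : (0:ℝ) ≤ (1 - δ^2/4) ^ j := by positivity
  have step1 : (1 - δ^2/4) ^ j * ((∫ t in (0:ℝ)..π, t ^ j * (π - t) ^ M) - π ^ (j+1) * (π - δ) ^ M)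
      ≤ (1 - δ^2/4) ^ j * ∫ t in (0:ℝ)..δ, t ^ j * (π - t) ^ M :=
    mul_le_mul_of_nonneg_left (J_lower j M h0 h1) hcj
  have step2 : (1 - δ^2/4) ^ j * (∫ t in (0:ℝ)..δ, t ^ j * (π - t) ^ M)
      ≤ ∫ t in (0:ℝ)..δ, sin t ^ j * (π - t) ^ M := by
    rw [← intervalIntegral.integral_const_mul]
    apply intervalIntegral.integral_mono_on h0.le
    · apply Continuous.intervalIntegrable; continuity
    · apply Continuous.intervalIntegrable; continuity
    · intro x hx
      have hπx : (0:ℝ) ≤ (π - x) ^ M := pow_nonneg (by linarith [hx.2.trans hδπ]) M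
      have key : (1 - δ^2/4) * x ≤ sin x := by
        rcases eq_or_lt_of_le hx.1 with h | h
        · simp [← h]
        · have hx1 : x ≤ 1 := hx.2.trans h1
          have := Real.sin_gt_sub_cube h
          nlinarith [hx.2, mul_nonneg (mul_nonneg (sub_nonneg.2 hx.2)
            (by linarith [hx.1] : (0:ℝ) ≤ δ + x)) h.le]
      have keynn : 0 ≤ (1 - δ^2/4) * x := mul_nonneg hc0 hx.1
      have : ((1 - δ^2/4) * x) ^ j ≤ sin x ^ j := pow_le_pow_left₀ keynn key j
      rw [mul_pow] at this
      calc (1 - δ^2/4) ^ j * (x ^ j * (π - x) ^ M) = ((1 - δ^2/4) ^ j * x ^ j) * (π - x) ^ M := by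
            ring
        _ ≤ sin x ^ j * (π - x) ^ M := mul_le_mul_of_nonneg_right this hπx
  have step3 : (∫ t in (0:ℝ)..δ, sin t ^ j * (π - t) ^ M)
      ≤ ∫ t in (0:ℝ)..π, sin t ^ j * (π - t) ^ M := by
    have hsplit : (∫ t in (0:ℝ)..δ, sin t ^ j * (π - t) ^ M)
        + ∫ t in δ..π, sin t ^ j * (π - t) ^ M
        = ∫ t in (0:ℝ)..π, sin t ^ j * (π - t) ^ M := by
      apply intervalIntegral.integral_add_adjacent_intervals <;>
        (apply Continuous.intervalIntegrable; continuity)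
    have hnn : 0 ≤ ∫ t in δ..π, sin t ^ j * (π - t) ^ M := by
      apply intervalIntegral.integral_nonneg hδπ
      intro x hx
      have h1 : 0 ≤ sin x := Real.sin_nonneg_of_nonneg_of_le_pi (h0.le.trans hx.1) hx.2
      have h2 : (0:ℝ) ≤ (π - x) ^ M := pow_nonneg (by linarith [hx.2]) M
      positivity
    linarith
  linarith

lemma part2 (ℓ : ℕ) :
    (2 * Real.pi ^ ((3 : ℝ) / 2)) ^ ℓ * Real.Gamma ((ℓ : ℝ) / 2 + 1) / Real.Gamma ((ℓ : ℝ) + 1)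
      = omegaS ℓ * Real.pi ^ ℓ / 2 := by
  have hspos : 0 < Real.Gamma (((ℓ:ℝ)+1)/2) := Real.Gamma_pos_of_pos (by positivity)
  have hs : Real.Gamma (((ℓ:ℝ)+1)/2) ≠ 0 := hspos.ne'
  have hG : Real.Gamma ((ℓ:ℝ)+1) ≠ 0 := (Real.Gamma_pos_of_pos (by positivity)).ne'
  have h2 : (2:ℝ) ^ (-(ℓ:ℝ)) = ((2:ℝ)^ℓ)⁻¹ := by
    rw [Real.rpow_neg (by norm_num), Real.rpow_natCast]
  have hdup : Real.Gamma (((ℓ:ℝ)+1)/2) * Real.Gamma ((ℓ:ℝ)/2 + 1)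
      = Real.Gamma ((ℓ:ℝ)+1) * ((2:ℝ)^ℓ)⁻¹ * Real.sqrt π := by
    have h := Real.Gamma_mul_Gamma_add_half (((ℓ:ℝ)+1)/2)
    rw [show ((ℓ:ℝ)+1)/2 + 1/2 = (ℓ:ℝ)/2 + 1 by ring] at h
    rw [show (2:ℝ)*(((ℓ:ℝ)+1)/2) = (ℓ:ℝ)+1 by ring] at h
    rw [show (1:ℝ) - ((ℓ:ℝ)+1) = -(ℓ:ℝ) by ring, h2] at h
    exact h
  have hΓ : Real.Gamma ((ℓ:ℝ)/2+1)
      = Real.Gamma ((ℓ:ℝ)+1) * ((2:ℝ)^ℓ)⁻¹ * Real.sqrt π / Real.Gamma (((ℓ:ℝ)+1)/2) := by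
    rw [eq_div_iff hs]; linear_combination hdup
  have hπ : ((π:ℝ) ^ ((3:ℝ)/2)) ^ ℓ * Real.sqrt π = π ^ (((ℓ:ℝ)+1)/2) * π ^ ℓ := by
    rw [← Real.rpow_natCast (π ^ ((3:ℝ)/2)) ℓ, ← Real.rpow_mul pi_pos.le,
      Real.sqrt_eq_rpow, ← Real.rpow_natCast π ℓ, ← Real.rpow_add pi_pos,
      ← Real.rpow_add pi_pos]
    norm_num
    ring_nf
  rw [hΓ]
  unfold omegaS
  rw [mul_pow]
  have h2ℓ : ((2:ℝ)^ℓ) ≠ 0 := by positivity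
  field_simp
  linear_combination hπ


lemma fact_prod (N l : ℕ) :
    ((N + l).factorial : ℝ) = (N.factorial : ℝ) * ∏ j ∈ Finset.range l, ((N:ℝ) + j + 1) := by
  induction l with
  | zero => simp
  | succ l ih =>
    rw [← Nat.add_assoc, Nat.factorial_succ, Finset.prod_range_succ]
    push_cast [ih]
    ring

lemma omegaS_pos (ℓ : ℕ) : 0 < omegaS ℓ := by
  have hΓ : 0 < Real.Gamma (((ℓ:ℝ)+1)/2) := Real.Gamma_pos_of_pos (by positivity)
  unfold omegaS
  positivity

noncomputable def Cc (d k ℓ : ℕ) (n : ℕ) : ℝ :=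
  (n:ℝ)^ℓ * omegaS ℓ * ((n - d + k).factorial : ℝ) / (2 * π ^ (n - d + k)) *
    (1 / (((k-1).factorial : ℝ) * (((n - d + k + ℓ - k).factorial : ℝ))))

lemma Cc_nonneg (d k ℓ n : ℕ) : 0 ≤ Cc d k ℓ n := by
  have hω := (omegaS_pos ℓ).le
  unfold Cc
  positivity

lemma T1 (d k ℓ : ℕ) (hk : k ≤ d) :
    Tendsto (fun n : ℕ => (n:ℝ)^ℓ * ((n - d + k).factorial : ℝ) /
      (((n - d + k) + ℓ).factorial : ℝ)) atTop (𝓝 1) := by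
  have hg : Tendsto (fun n : ℕ => ∏ i ∈ Finset.range ℓ,
      ((n:ℝ)/((n:ℝ) + ((i:ℝ) + 1 - ((d - k : ℕ):ℝ))))) atTop
      (𝓝 (∏ _i ∈ Finset.range ℓ, (1:ℝ))) := by
    apply tendsto_finset_prod
    intro i _
    exact tendsto_natCast_div_add_atTop ((i:ℝ) + 1 - ((d - k : ℕ):ℝ))
  rw [Finset.prod_const_one] at hg
  apply Filter.Tendsto.congr' _ hg
  filter_upwards [Filter.eventually_ge_atTop d] with n hn
  have h2 : d - k ≤ n := by omega
  have hNcast : ((n - d + k : ℕ):ℝ) = (n:ℝ) - ((d-k:ℕ):ℝ) := by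
    rw [show n - d + k = n - (d - k) by omega, Nat.cast_sub h2]
  have key : ∀ i : ℕ, (n:ℝ) + ((i:ℝ) + 1 - ((d-k:ℕ):ℝ)) = ((n - d + k:ℕ):ℝ) + i + 1 := by
    intro i; rw [hNcast]; ring
  have hfact : ((n - d + k).factorial : ℝ) ≠ 0 := by positivity
  rw [Finset.prod_congr rfl (fun i _ => by rw [key i])]
  rw [fact_prod (n - d + k) ℓ, Finset.prod_div_distrib, Finset.prod_const, Finset.card_range]
  rw [mul_comm ((n:ℝ)^ℓ) (((n - d + k).factorial : ℝ)), mul_div_mul_left _ _ hfact]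

lemma tail0 (d k ℓ : ℕ) (hk1 : 1 ≤ k) (hk : k ≤ d) (hℓ : ℓ ≤ k) {δ : ℝ}
    (h0 : 0 < δ) (h1 : δ ≤ 1) :
    Tendsto (fun n : ℕ => Cc d k ℓ n * (π ^ k * (π - δ) ^ (n - d + k + ℓ - k)))
      atTop (𝓝 0) := by
  have hπ3 := Real.pi_gt_three
  have hπ0 := Real.pi_pos
  have hπδ : (1:ℝ) ≤ π - δ := by linarith
  set r : ℝ := (π - δ)/π with hrdef
  have hr0 : 0 < r := by rw [hrdef]; positivity
  have hr1 : r < 1 := by rw [hrdef, div_lt_one hπ0]; linarith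
  have hgeom : Tendsto (fun n : ℕ => (n:ℝ)^k * r^n) atTop (𝓝 0) :=
    tendsto_pow_const_mul_const_pow_of_lt_one k hr0.le hr1
  set Q : ℝ := omegaS ℓ * π^k/(2*((k-1).factorial : ℝ) * r^(d-k)) with hQ
  have hg : Tendsto (fun n : ℕ => Q * ((n:ℝ)^k * r^n)) atTop (𝓝 0) := by
    simpa using hgeom.const_mul Q
  apply squeeze_zero' _ _ hg
  · filter_upwards with n
    exact mul_nonneg (Cc_nonneg d k ℓ n)
      (mul_nonneg (by positivity) (pow_nonneg (by linarith) _))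
  · filter_upwards [Filter.eventually_ge_atTop d] with n hn
    set N := n - d + k with hNdef
    set M := n - d + k + ℓ - k with hMdef
    have hω := omegaS_pos ℓ
    have hNn : N ≤ n := by omega
    have hNM : M ≤ N := by omega
    have hNdk : N + (d - k) = n := by omega
    have hNat : N.factorial ≤ M.factorial * n^(k-ℓ) := by
      have h := Nat.factorial_mul_descFactorial (show k - ℓ ≤ N by omega)
      rw [show N - (k - ℓ) = M by omega] at h
      calc N.factorial = M.factorial * N.descFactorial (k-ℓ) := h.symm
        _ ≤ M.factorial * N^(k-ℓ) :=
            Nat.mul_le_mul_left _ (Nat.descFactorial_le_pow _ _)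
        _ ≤ M.factorial * n^(k-ℓ) :=
            Nat.mul_le_mul_left _ (Nat.pow_le_pow_left hNn _)
    have hfle : ((N.factorial : ℝ)) ≤ (M.factorial : ℝ) * (n:ℝ)^(k-ℓ) := by
      exact_mod_cast hNat
    have hpow : (π - δ)^M ≤ (π - δ)^N := pow_le_pow_right₀ hπδ hNM
    have hM0 : ((M.factorial : ℝ)) ≠ 0 := by positivity
    have hCeq : Cc d k ℓ n * (π ^ k * (π - δ) ^ M)
        = (omegaS ℓ * ((n:ℝ)^ℓ * (N.factorial:ℝ)) * π^k * (π - δ)^M)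
            / (2 * π^N * ((k-1).factorial : ℝ) * (M.factorial : ℝ)) := by
      unfold Cc
      rw [← hNdef, ← hMdef]
      field_simp
    rw [hCeq]
    have hb1 : (omegaS ℓ * ((n:ℝ)^ℓ * (N.factorial:ℝ)) * π^k * (π - δ)^M)
            / (2 * π^N * ((k-1).factorial : ℝ) * (M.factorial : ℝ))
        ≤ (omegaS ℓ * ((n:ℝ)^ℓ * ((M.factorial : ℝ) * (n:ℝ)^(k-ℓ))) * π^k * (π - δ)^N)
            / (2 * π^N * ((k-1).factorial : ℝ) * (M.factorial : ℝ)) := by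
      gcongr
    refine hb1.trans (le_of_eq ?_)
    have hQeq : Q * ((n:ℝ)^k * r^n)
        = Q * ((n:ℝ)^ℓ * (n:ℝ)^(k-ℓ) * (r^N * r^(d-k))) := by
      rw [← pow_add, ← pow_add, show ℓ + (k - ℓ) = k by omega, show N + (d-k) = n by omega]
    rw [hQeq, hQ, hrdef]
    have hrdk : ((π - δ)/π)^(d-k) ≠ 0 := by positivity
    rw [div_pow, div_pow]
    field_simp

/-- Analytic content of the second limit relation of Theorem 5.8: for fixed
`d ≥ 1`, `1 ≤ k ≤ d` and `0 ≤ ℓ ≤ k`,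
`n^ℓ ω_{ℓ+1} ((n-d+k)!/(2π^{n-d+k})) B{n-d+k+ℓ, k}` converges, as `n → ∞`, to
`(2π^{3/2})^ℓ Γ(ℓ/2 + 1)/Γ(ℓ + 1)`, which equals `ω_{ℓ+1} π^ℓ / 2`. -/
theorem weighted_face_intrinsic_volume_limit (d k ℓ : ℕ)
    (hd : 1 ≤ d) (hk1 : 1 ≤ k) (hk : k ≤ d) (hℓ : ℓ ≤ k) :
    Filter.Tendsto
      (fun n : ℕ => (n : ℝ) ^ ℓ * omegaS ℓ *
        ((Nat.factorial (n - d + k) : ℝ) / (2 * Real.pi ^ (n - d + k))) *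
        bQ (n - d + k + ℓ) k)
      Filter.atTop
      (nhds ((2 * Real.pi ^ ((3 : ℝ) / 2)) ^ ℓ * Real.Gamma ((ℓ : ℝ) / 2 + 1) /
        Real.Gamma ((ℓ : ℝ) + 1))) ∧
    (2 * Real.pi ^ ((3 : ℝ) / 2)) ^ ℓ * Real.Gamma ((ℓ : ℝ) / 2 + 1) / Real.Gamma ((ℓ : ℝ) + 1)
      = omegaS ℓ * Real.pi ^ ℓ / 2 := by
  refine ⟨?_, part2 ℓ⟩
  rw [part2 ℓ]
  have hπ0 := Real.pi_pos
  have hπ3 := Real.pi_gt_three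
  have hω := omegaS_pos ℓ
  set L : ℝ := omegaS ℓ * π ^ ℓ / 2 with hLdef
  have hL : 0 < L := by rw [hLdef]; positivity
  have hk0 : k ≠ 0 := by omega
  have haeq : ∀ᶠ n : ℕ in atTop, (n : ℝ) ^ ℓ * omegaS ℓ *
        ((Nat.factorial (n - d + k) : ℝ) / (2 * Real.pi ^ (n - d + k))) *
        bQ (n - d + k + ℓ) k
      = Cc d k ℓ n * ∫ t in (0:ℝ)..π, sin t ^ (k-1) * (π - t) ^ (n - d + k + ℓ - k) := by
    filter_upwards [eventually_ge_atTop d] with n hn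
    rw [← flipInt (k-1) (n - d + k + ℓ - k)]
    unfold bQ
    rw [if_neg hk0, if_pos (show k ≤ n - d + k + ℓ by omega)]
    unfold Cc
    ring
  have hueq : ∀ᶠ n : ℕ in atTop, Cc d k ℓ n *
        ∫ t in (0:ℝ)..π, (t:ℝ) ^ (k-1) * (π - t) ^ (n - d + k + ℓ - k)
      = L * ((n:ℝ)^ℓ * ((n - d + k).factorial : ℝ) / (((n - d + k) + ℓ).factorial : ℝ)) := by
    filter_upwards [eventually_ge_atTop d] with n hn
    rw [betaNat (k-1) (n - d + k + ℓ - k)]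
    rw [show (k-1) + (n - d + k + ℓ - k) + 1 = (n - d + k) + ℓ by omega]
    unfold Cc
    rw [hLdef]
    have h1 : ((k-1).factorial : ℝ) ≠ 0 := by positivity
    have h2 : (((n - d + k + ℓ - k).factorial : ℝ)) ≠ 0 := by positivity
    have h3 : ((((n - d + k) + ℓ).factorial : ℝ)) ≠ 0 := by positivity
    have h4 : (π:ℝ) ^ ((n - d + k) + ℓ) = π ^ (n - d + k) * π ^ ℓ := pow_add π _ _
    field_simp
    ring
  have hu : Tendsto (fun n : ℕ => L * ((n:ℝ)^ℓ * ((n - d + k).factorial : ℝ) /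
      (((n - d + k) + ℓ).factorial : ℝ))) atTop (𝓝 L) := by
    have := (T1 d k ℓ hk).const_mul L
    simpa using this
  rw [tendsto_order]
  constructor
  · intro b hb
    have hδseq : Tendsto (fun m : ℕ => (1 - (1/((m:ℝ)+1))^2/4)^(k-1) * L) atTop (𝓝 L) := by
      have h0 : Tendsto (fun m : ℕ => 1/((m:ℝ)+1)) atTop (𝓝 (0:ℝ)) :=
        tendsto_one_div_add_atTop_nhds_zero_nat
      have h1 := ((((h0.pow 2).div_const 4).const_sub 1).pow (k-1)).mul_const L
      convert h1 using 2
      norm_num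
    obtain ⟨m, hm⟩ := (hδseq.eventually (eventually_gt_nhds hb)).exists
    set δ : ℝ := 1/((m:ℝ)+1) with hδdef
    have hδ0 : 0 < δ := by positivity
    have hδ1 : δ ≤ 1 := by
      rw [hδdef, div_le_one (by positivity)]
      linarith [Nat.cast_nonneg (α := ℝ) m]
    set c : ℝ := (1 - δ^2/4)^(k-1) with hcdef
    have hc0 : 0 ≤ c := by
      rw [hcdef]
      apply pow_nonneg
      nlinarith
    have htail := tail0 d k ℓ hk1 hk hℓ hδ0 hδ1
    have hlow : Tendsto (fun n : ℕ =>
        c * (L * ((n:ℝ)^ℓ * ((n - d + k).factorial : ℝ) / (((n - d + k) + ℓ).factorial : ℝ))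
          - Cc d k ℓ n * (π ^ k * (π - δ) ^ (n - d + k + ℓ - k)))) atTop (𝓝 (c * L)) := by
      have := (hu.sub htail).const_mul c
      simpa using this
    have hble : ∀ᶠ n : ℕ in atTop,
        c * (L * ((n:ℝ)^ℓ * ((n - d + k).factorial : ℝ) / (((n - d + k) + ℓ).factorial : ℝ))
          - Cc d k ℓ n * (π ^ k * (π - δ) ^ (n - d + k + ℓ - k)))
        ≤ (n : ℝ) ^ ℓ * omegaS ℓ *
            ((Nat.factorial (n - d + k) : ℝ) / (2 * Real.pi ^ (n - d + k))) *
            bQ (n - d + k + ℓ) k := by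
      filter_upwards [haeq, hueq] with n h1 h2
      rw [h1, ← h2]
      have hI := I_lower (k-1) (n - d + k + ℓ - k) hδ0 hδ1
      rw [show (k-1)+1 = k by omega] at hI
      have hmul := mul_le_mul_of_nonneg_left hI (Cc_nonneg d k ℓ n)
      calc c * (Cc d k ℓ n * (∫ t in (0:ℝ)..π, (t:ℝ) ^ (k-1) * (π - t) ^ (n - d + k + ℓ - k))
              - Cc d k ℓ n * (π ^ k * (π - δ) ^ (n - d + k + ℓ - k)))
          = Cc d k ℓ n * ((1 - δ^2/4)^(k-1) *
              ((∫ t in (0:ℝ)..π, (t:ℝ) ^ (k-1) * (π - t) ^ (n - d + k + ℓ - k))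
                - π ^ k * (π - δ) ^ (n - d + k + ℓ - k))) := by
            rw [hcdef]; ring
        _ ≤ Cc d k ℓ n * ∫ t in (0:ℝ)..π, sin t ^ (k-1) * (π - t) ^ (n - d + k + ℓ - k) := hmul
    filter_upwards [hble, hlow.eventually (eventually_gt_nhds hm)] with n h1 h2
    exact lt_of_lt_of_le h2 h1
  · intro b hb
    filter_upwards [haeq, hueq, hu.eventually (eventually_lt_nhds hb)] with n h1 h2 h3
    rw [h1]
    have hIJ := I_le_J (k-1) (n - d + k + ℓ - k)
    have hmul := mul_le_mul_of_nonneg_left hIJ (Cc_nonneg d k ℓ n)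
    calc Cc d k ℓ n * ∫ t in (0:ℝ)..π, sin t ^ (k-1) * (π - t) ^ (n - d + k + ℓ - k)
        ≤ Cc d k ℓ n * ∫ t in (0:ℝ)..π, (t:ℝ) ^ (k-1) * (π - t) ^ (n - d + k + ℓ - k) := hmul
      _ = L * ((n:ℝ)^ℓ * ((n - d + k).factorial : ℝ) / (((n - d + k) + ℓ).factorial : ℝ)) := h2
      _ < b := h3
end
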